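/- arXiv:2003.13143 — 3 statements merged into one kernel-verified Lean document; each statement's English description precedes it below -/
import Mathlib

section
/- Let T > 0 and let Θ be a mild solution of the critical dissipative quasi-geostrophic equation on [0,T] with data Θ₀, such that sup_{0≤t≤T} ‖Θ(t)‖_{X⁰} < ∞ and ∫₀^T ‖Θ(t)‖_{X¹} dt < ∞. Then for every t ∈ [0,T], ‖Θ(t)‖_{X⁰} + ∫₀^t ‖Θ(z)‖_{X¹} dz ≤ ‖Θ₀‖_{X⁰} + ∫₀^t ‖Θ(z)‖_{X⁰} ‖Θ(z)‖_{X¹} dz. -/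
set_option maxHeartbeats 1000000
set_option linter.unusedVariables false


open MeasureTheory Filter
open scoped ENNReal NNReal

noncomputable section

abbrev E2 : Type := EuclideanSpace ℝ (Fin 2)

/-- Fourier-side `X^σ` norm: `∫ |ξ|^σ |g ξ| dξ` (valued in `ℝ≥0∞`). -/
def Xnorm (σ : ℝ) (g : E2 → ℂ) : ℝ≥0∞ :=
  ∫⁻ ξ : E2, ENNReal.ofReal (‖ξ‖ ^ σ) * ‖g ξ‖₊

/-- Fourier-side quasi-geostrophic nonlinearity `N[Θ]`. -/
def QGN (Θ : ℝ → E2 → ℂ) (z : ℝ) (ξ : E2) : ℂ :=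
  ∫ η : E2, (((ξ 0 * η 1 - ξ 1 * η 0) / ‖η‖ : ℝ) : ℂ) * Θ z (ξ - η) * Θ z η

/-- `Θ` is a mild solution on `[0,T]` with data `Θ₀`. -/
def IsMildSolutionOn (Θ : ℝ → E2 → ℂ) (Θ₀ : E2 → ℂ) (T : ℝ) : Prop :=
  ∀ t ∈ Set.Icc (0:ℝ) T, ∀ᵐ ξ : E2 ∂volume, Θ t ξ =
    ((Real.exp (-(t * ‖ξ‖)) : ℝ) : ℂ) * Θ₀ ξ +
    ∫ z in (0:ℝ)..t, ((Real.exp (-((t - z) * ‖ξ‖)) : ℝ) : ℂ) * QGN Θ z ξ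

/-- `Θ` is a global mild solution with data `Θ₀`. -/
def IsGlobalMildSolution (Θ : ℝ → E2 → ℂ) (Θ₀ : E2 → ℂ) : Prop :=
  ∀ t : ℝ, 0 ≤ t → ∀ᵐ ξ : E2 ∂volume, Θ t ξ =
    ((Real.exp (-(t * ‖ξ‖)) : ℝ) : ℂ) * Θ₀ ξ +
    ∫ z in (0:ℝ)..t, ((Real.exp (-((t - z) * ‖ξ‖)) : ℝ) : ℂ) * QGN Θ z ξ

/-- `Θ ∈ C_b([0,∞), X^σ)`: bounded `X^σ` norm and `L¹`-continuity of `t ↦ |·|^σ Θ(t,·)`. -/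
def CbX (σ : ℝ) (Θ : ℝ → E2 → ℂ) : Prop :=
  (⨆ t ∈ Set.Ici (0:ℝ), Xnorm σ (Θ t)) < ⊤ ∧
  ∀ t ∈ Set.Ici (0:ℝ),
    Tendsto (fun s => ∫⁻ ξ : E2, ENNReal.ofReal (‖ξ‖ ^ σ) * ‖Θ s ξ - Θ t ξ‖₊)
      (nhdsWithin t (Set.Ici 0)) (nhds 0)



section QGaux

lemma det_abs_le (a b : E2) : |a 0 * b 1 - a 1 * b 0| ≤ ‖a‖ * ‖b‖ := by
  have ha : ‖a‖ ^ 2 = a 0 ^ 2 + a 1 ^ 2 := by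
    rw [EuclideanSpace.norm_eq, Real.sq_sqrt (by positivity)]
    simp [Fin.sum_univ_two, sq_abs]
  have hb : ‖b‖ ^ 2 = b 0 ^ 2 + b 1 ^ 2 := by
    rw [EuclideanSpace.norm_eq, Real.sq_sqrt (by positivity)]
    simp [Fin.sum_univ_two, sq_abs]
  have h1 : 0 ≤ ‖a‖ * ‖b‖ := by positivity
  rw [abs_le]
  constructor <;> nlinarith [sq_nonneg (a 0 * b 0 + a 1 * b 1), sq_nonneg (a 0 * b 1 - a 1 * b 0 - ‖a‖*‖b‖), sq_nonneg (a 0 * b 1 - a 1 * b 0 + ‖a‖*‖b‖)]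

lemma coef_abs_le (ξ η : E2) : |(ξ 0 * η 1 - ξ 1 * η 0) / ‖η‖| ≤ ‖ξ - η‖ := by
  rcases eq_or_ne η 0 with rfl | hη
  · simp
  · have h0 : (0:ℝ) < ‖η‖ := norm_pos_iff.mpr hη
    rw [abs_div, abs_of_pos h0, div_le_iff₀ h0]
    have : ξ 0 * η 1 - ξ 1 * η 0 = (ξ - η) 0 * η 1 - (ξ - η) 1 * η 0 := by
      simp [PiLp.sub_apply]; ring
    rw [this]
    exact det_abs_le _ _

lemma calc1 {r : ℝ} (hr : 0 ≤ r) {a t : ℝ} (h : a ≤ t) :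
    ∫⁻ z in Set.Ioc a t, ENNReal.ofReal (r * Real.exp (-((z - a) * r))) =
      ENNReal.ofReal (1 - Real.exp (-((t - a) * r))) := by
  have hc : Continuous fun z : ℝ => r * Real.exp (-((z - a) * r)) := by continuity
  have hint : IntegrableOn (fun z : ℝ => r * Real.exp (-((z - a) * r))) (Set.Ioc a t) := by
    exact hc.integrableOn_Ioc
  rw [← ofReal_integral_eq_lintegral_ofReal hint
      (Filter.Eventually.of_forall fun z => by positivity)]
  congr 1
  rw [← intervalIntegral.integral_of_le h]
  have hderiv : ∀ z ∈ Set.uIcc a t, HasDerivAt (fun z : ℝ => -Real.exp (-((z - a) * r)))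
      (r * Real.exp (-((z - a) * r))) z := by
    intro z _
    have h1 : HasDerivAt (fun z : ℝ => -((z - a) * r)) (-r) z := by
      simpa using (((hasDerivAt_id z).sub_const a).mul_const r).fun_neg
    have := (h1.exp).fun_neg
    rw [show r * Real.exp (-((z - a) * r)) = -(Real.exp (-((z - a) * r)) * -r) by ring]
    exact this
  rw [intervalIntegral.integral_eq_sub_of_hasDerivAt hderiv (hc.intervalIntegrable a t)]
  simp [sub_self]
  ring


lemma key1 {r t : ℝ} (hr : 0 ≤ r) (ht : 0 ≤ t) {G : ℝ → ℝ≥0∞} (hG : Measurable G) :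
    (∫⁻ s in Set.Ioc (0:ℝ) t, ENNReal.ofReal (Real.exp (-((t - s) * r))) * G s) +
      (∫⁻ z in Set.Ioc (0:ℝ) t, ENNReal.ofReal r *
        ∫⁻ s in Set.Ioc (0:ℝ) z, ENNReal.ofReal (Real.exp (-((z - s) * r))) * G s)
      ≤ ∫⁻ s in Set.Ioc (0:ℝ) t, G s := by
  set F : ℝ → ℝ → ℝ≥0∞ := fun z s =>
    (Set.Ioc (0:ℝ) z).indicator (fun s => ENNReal.ofReal (r * Real.exp (-((z - s) * r))) * G s) s
    with hF
  have hFmeas : Measurable (Function.uncurry F) := by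
    have : Function.uncurry F = fun p : ℝ × ℝ =>
        Set.indicator {p : ℝ × ℝ | 0 < p.2 ∧ p.2 ≤ p.1}
          (fun p => ENNReal.ofReal (r * Real.exp (-((p.1 - p.2) * r))) * G p.2) p := by
      ext p
      simp only [Function.uncurry, hF, Set.indicator_apply, Set.mem_Ioc, Set.mem_setOf_eq]
    rw [this]
    apply Measurable.indicator
    · exact (Measurable.ennreal_ofReal (by fun_prop)).mul (hG.comp measurable_snd)
    · exact MeasurableSet.inter (measurableSet_lt measurable_const measurable_snd)
        (measurableSet_le measurable_snd measurable_fst)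
  -- step 1: rewrite second term
  have step1 : (∫⁻ z in Set.Ioc (0:ℝ) t, ENNReal.ofReal r *
        ∫⁻ s in Set.Ioc (0:ℝ) z, ENNReal.ofReal (Real.exp (-((z - s) * r))) * G s)
      = ∫⁻ z in Set.Ioc (0:ℝ) t, ∫⁻ s in Set.Ioc (0:ℝ) t, F z s := by
    apply setLIntegral_congr_fun measurableSet_Ioc
    intro z hz
    dsimp only
    rw [← lintegral_const_mul _ ((Measurable.ennreal_ofReal (by fun_prop)).fun_mul hG)]
    simp_rw [← mul_assoc, ← ENNReal.ofReal_mul hr]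
    rw [hF]
    rw [lintegral_indicator measurableSet_Ioc, Measure.restrict_restrict measurableSet_Ioc,
      Set.inter_eq_left.mpr (Set.Ioc_subset_Ioc le_rfl hz.2)]
  -- step 2: swap
  have step2 : (∫⁻ z in Set.Ioc (0:ℝ) t, ∫⁻ s in Set.Ioc (0:ℝ) t, F z s)
      = ∫⁻ s in Set.Ioc (0:ℝ) t, ∫⁻ z in Set.Ioc (0:ℝ) t, F z s := by
    exact lintegral_lintegral_swap hFmeas.aemeasurable
  -- step 3: inner integral
  have step3 : ∀ s ∈ Set.Ioc (0:ℝ) t,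
      (∫⁻ z in Set.Ioc (0:ℝ) t, F z s) =
        ENNReal.ofReal (1 - Real.exp (-((t - s) * r))) * G s := by
    intro s hs
    have h1 : ∀ z, F z s = (Set.Ici s).indicator
        (fun z => ENNReal.ofReal (r * Real.exp (-((z - s) * r))) * G s) z := by
      intro z
      simp only [hF, Set.indicator_apply, Set.mem_Ioc, Set.mem_Ici]
      by_cases h : s ≤ z <;> simp [h, hs.1]
    simp_rw [h1]
    rw [lintegral_indicator measurableSet_Ici, Measure.restrict_restrict measurableSet_Ici]
    have h2 : Set.Ici s ∩ Set.Ioc 0 t = Set.Icc s t := by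
      ext z; simp only [Set.mem_inter_iff, Set.mem_Ici, Set.mem_Ioc, Set.mem_Icc]
      constructor
      · rintro ⟨h1, _, h3⟩; exact ⟨h1, h3⟩
      · rintro ⟨h1, h3⟩; exact ⟨h1, lt_of_lt_of_le hs.1 h1, h3⟩
    rw [h2, ← Measure.restrict_congr_set Ioc_ae_eq_Icc,
      lintegral_mul_const _ (Measurable.ennreal_ofReal (by fun_prop)), calc1 hr hs.2]
  rw [step1, step2]
  rw [← lintegral_add_left ((Measurable.ennreal_ofReal (by fun_prop)).fun_mul hG)]
  apply le_of_eq
  apply setLIntegral_congr_fun measurableSet_Ioc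
  intro s hs
  dsimp only
  rw [step3 s hs, ← add_mul, ← ENNReal.ofReal_add (by positivity) (by
      have : Real.exp (-((t - s) * r)) ≤ 1 := Real.exp_le_one_iff.mpr (by nlinarith [hs.2])
      linarith)]
  norm_num

lemma key0 {r t : ℝ} (hr : 0 ≤ r) (ht : 0 ≤ t) :
    ENNReal.ofReal (Real.exp (-(t * r))) +
      (∫⁻ z in Set.Ioc (0:ℝ) t, ENNReal.ofReal (r * Real.exp (-(z * r)))) = 1 := by
  have h := calc1 hr (a := 0) ht
  simp only [sub_zero] at h
  rw [h, ← ENNReal.ofReal_add (by positivity) (by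
    have : Real.exp (-(t * r)) ≤ 1 := Real.exp_le_one_iff.mpr (by nlinarith)
    linarith)]
  norm_num

def Bfun (Θ : ℝ → E2 → ℂ) (z : ℝ) (ξ : E2) : ℝ≥0∞ :=
  ∫⁻ η : E2, (‖ξ - η‖₊ : ℝ≥0∞) * ‖Θ z (ξ - η)‖₊ * ‖Θ z η‖₊

lemma Bfun_meas {Θ : ℝ → E2 → ℂ} (hmeas : Measurable (Function.uncurry Θ)) :
    Measurable (Function.uncurry (Bfun Θ)) := by
  have : Function.uncurry (Bfun Θ) = fun p : ℝ × E2 =>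
      ∫⁻ η : E2, (‖p.2 - η‖₊ : ℝ≥0∞) * ‖Θ p.1 (p.2 - η)‖₊ * ‖Θ p.1 η‖₊ := rfl
  rw [this]
  apply Measurable.lintegral_prod_right
    (f := fun (p : ℝ × E2) (η : E2) => (‖p.2 - η‖₊ : ℝ≥0∞) * ‖Θ p.1 (p.2 - η)‖₊ * ‖Θ p.1 η‖₊)
  apply Measurable.fun_mul
  apply Measurable.fun_mul
  · exact measurable_coe_nnreal_ennreal.comp
      ((measurable_fst.snd.sub measurable_snd).nnnorm)
  · exact (measurable_coe_nnreal_ennreal.comp (Measurable.nnnorm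
      (hmeas.comp (measurable_fst.fst.prodMk (measurable_fst.snd.sub measurable_snd)))))
  · exact measurable_coe_nnreal_ennreal.comp (Measurable.nnnorm
      (hmeas.comp (measurable_fst.fst.prodMk measurable_snd)))

lemma QGN_nnnorm_le (Θ : ℝ → E2 → ℂ) (z : ℝ) (ξ : E2) :
    (‖QGN Θ z ξ‖₊ : ℝ≥0∞) ≤ Bfun Θ z ξ := by
  refine le_trans (enorm_integral_le_lintegral_enorm _) (lintegral_mono fun η => ?_)
  have : ‖(((ξ 0 * η 1 - ξ 1 * η 0) / ‖η‖ : ℝ) : ℂ) * Θ z (ξ - η) * Θ z η‖₊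
      = ‖((ξ 0 * η 1 - ξ 1 * η 0) / ‖η‖ : ℝ)‖₊ * ‖Θ z (ξ - η)‖₊ * ‖Θ z η‖₊ := by
    rw [nnnorm_mul, nnnorm_mul, Complex.nnnorm_real]
  rw [enorm_eq_nnnorm, this]
  push_cast
  gcongr
  rw [← NNReal.coe_le_coe, coe_nnnorm, coe_nnnorm, Real.norm_eq_abs]
  exact coef_abs_le ξ η

lemma Bfun_lintegral {Θ : ℝ → E2 → ℂ} (hmeas : Measurable (Function.uncurry Θ)) (z : ℝ) :
    ∫⁻ ξ : E2, Bfun Θ z ξ = Xnorm 0 (Θ z) * Xnorm 1 (Θ z) := by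
  have hθ : Measurable (Θ z) := hmeas.comp (Measurable.prodMk measurable_const measurable_id)
  have hX1 : Xnorm 1 (Θ z) = ∫⁻ x : E2, (‖x‖₊ : ℝ≥0∞) * ‖Θ z x‖₊ := by
    unfold Xnorm
    congr 1; funext x
    rw [Real.rpow_one, ofReal_norm, enorm_eq_nnnorm]
  have hX0 : Xnorm 0 (Θ z) = ∫⁻ x : E2, (‖Θ z x‖₊ : ℝ≥0∞) := by
    unfold Xnorm
    congr 1; funext x
    rw [Real.rpow_zero, ENNReal.ofReal_one, one_mul]
  have hker : Measurable (Function.uncurry fun ξ η : E2 =>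
      (‖ξ - η‖₊ : ℝ≥0∞) * ‖Θ z (ξ - η)‖₊ * ‖Θ z η‖₊) := by
    apply Measurable.fun_mul
    apply Measurable.fun_mul
    · exact measurable_coe_nnreal_ennreal.comp ((measurable_fst.sub measurable_snd).nnnorm)
    · exact measurable_coe_nnreal_ennreal.comp
        ((hθ.comp (measurable_fst.sub measurable_snd)).nnnorm)
    · exact measurable_coe_nnreal_ennreal.comp ((hθ.comp measurable_snd).nnnorm)
  unfold Bfun
  rw [lintegral_lintegral_swap hker.aemeasurable]
  have : ∀ η : E2, (∫⁻ ξ : E2, (‖ξ - η‖₊ : ℝ≥0∞) * ‖Θ z (ξ - η)‖₊ * ‖Θ z η‖₊)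
      = Xnorm 1 (Θ z) * ‖Θ z η‖₊ := by
    intro η
    rw [lintegral_mul_const _ (by
      apply Measurable.fun_mul
      · exact measurable_coe_nnreal_ennreal.comp ((measurable_id.sub measurable_const).nnnorm)
      · exact measurable_coe_nnreal_ennreal.comp
          ((hθ.comp (measurable_id.sub measurable_const)).nnnorm))]
    congr 1
    rw [hX1]
    exact lintegral_sub_right_eq_self (fun x : E2 => (‖x‖₊ : ℝ≥0∞) * ‖Θ z x‖₊) η
  simp_rw [this]
  rw [lintegral_const_mul _ hθ.nnnorm.coe_nnreal_ennreal, ← hX0, mul_comm]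

end QGaux

/-- the a priori inequality
`‖Θ(t)‖_{X⁰} + ∫₀^t ‖Θ‖_{X¹} ≤ ‖Θ₀‖_{X⁰} + ∫₀^t ‖Θ‖_{X⁰}‖Θ‖_{X¹}` for mild solutions. -/
theorem qg_apriori_estimate (T : ℝ) (hT : 0 < T) (Θ₀ : E2 → ℂ) (hmeas₀ : Measurable Θ₀)
    (Θ : ℝ → E2 → ℂ) (hmeas : Measurable (Function.uncurry Θ))
    (hmild : IsMildSolutionOn Θ Θ₀ T)
    (hsup : (⨆ t ∈ Set.Icc (0:ℝ) T, Xnorm 0 (Θ t)) < ⊤)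
    (hint : (∫⁻ t in Set.Icc (0:ℝ) T, Xnorm 1 (Θ t)) < ⊤) :
    ∀ t ∈ Set.Icc (0:ℝ) T,
      Xnorm 0 (Θ t) + ∫⁻ z in Set.Ioc (0:ℝ) t, Xnorm 1 (Θ z)
        ≤ Xnorm 0 Θ₀ + ∫⁻ z in Set.Ioc (0:ℝ) t, Xnorm 0 (Θ z) * Xnorm 1 (Θ z) := by
  intro t ht
  have hB := Bfun_meas hmeas
  -- pointwise a.e. bound, for each τ ∈ [0,T]
  have hpt : ∀ τ ∈ Set.Icc (0:ℝ) T, ∀ᵐ ξ : E2 ∂volume,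
      (‖Θ τ ξ‖₊ : ℝ≥0∞) ≤ ENNReal.ofReal (Real.exp (-(τ * ‖ξ‖))) * ‖Θ₀ ξ‖₊ +
        ∫⁻ z in Set.Ioc (0:ℝ) τ, ENNReal.ofReal (Real.exp (-((τ - z) * ‖ξ‖))) * Bfun Θ z ξ := by
    intro τ hτ
    filter_upwards [hmild τ hτ] with ξ hξ
    rw [hξ]
    refine le_trans (le_trans (ENNReal.coe_le_coe.2 (nnnorm_add_le _ _))
      (le_of_eq (ENNReal.coe_add _ _))) (add_le_add ?_ ?_)
    · rw [nnnorm_mul, Complex.nnnorm_real, ENNReal.coe_mul, ← enorm_eq_nnnorm,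
        Real.enorm_eq_ofReal (Real.exp_pos _).le]
    · rw [intervalIntegral.integral_of_le hτ.1]
      refine le_trans (enorm_integral_le_lintegral_enorm _) (lintegral_mono fun z => ?_)
      rw [enorm_eq_nnnorm, nnnorm_mul, Complex.nnnorm_real, ENNReal.coe_mul, ← enorm_eq_nnnorm,
        Real.enorm_eq_ofReal (Real.exp_pos _).le]
      exact mul_le_mul_right (QGN_nnnorm_le Θ z ξ) _
  -- measurability helpers
  have hm0 : ∀ c : ℝ, Measurable fun ξ : E2 =>
      ENNReal.ofReal (Real.exp (-(c * ‖ξ‖))) * (‖Θ₀ ξ‖₊ : ℝ≥0∞) :=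
    fun c => (Measurable.ennreal_ofReal (by fun_prop)).mul hmeas₀.nnnorm.coe_nnreal_ennreal
  have hmQ0 : Measurable fun ξ : E2 =>
      ∫⁻ s in Set.Ioc (0:ℝ) t, ENNReal.ofReal (Real.exp (-((t - s) * ‖ξ‖))) * Bfun Θ s ξ := by
    have h1 : Measurable fun p : E2 × ℝ =>
        ENNReal.ofReal (Real.exp (-((t - p.2) * ‖p.1‖))) * Bfun Θ p.2 p.1 :=
      (Measurable.ennreal_ofReal (by fun_prop)).mul
        (hB.comp (f := fun p : E2 × ℝ => (p.2, p.1))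
          (measurable_snd.prodMk measurable_fst))
    exact h1.lintegral_prod_right'
  -- the X⁰ bound at time t
  have hA : Xnorm 0 (Θ t) ≤
      (∫⁻ ξ : E2, ENNReal.ofReal (Real.exp (-(t * ‖ξ‖))) * ‖Θ₀ ξ‖₊) +
      ∫⁻ ξ : E2, ∫⁻ z in Set.Ioc (0:ℝ) t,
        ENNReal.ofReal (Real.exp (-((t - z) * ‖ξ‖))) * Bfun Θ z ξ := by
    have h0 : Xnorm 0 (Θ t) = ∫⁻ ξ : E2, (‖Θ t ξ‖₊ : ℝ≥0∞) := by
      unfold Xnorm; congr 1; funext ξ; rw [Real.rpow_zero, ENNReal.ofReal_one, one_mul]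
    rw [h0, ← lintegral_add_left (hm0 t)]
    exact lintegral_mono_ae (hpt t ht)
  -- the X¹ bound at each time z ∈ (0,t]
  have hB1 : ∀ z ∈ Set.Ioc (0:ℝ) t, Xnorm 1 (Θ z) ≤
      (∫⁻ ξ : E2, (‖ξ‖₊ : ℝ≥0∞) * (ENNReal.ofReal (Real.exp (-(z * ‖ξ‖))) * ‖Θ₀ ξ‖₊)) +
      ∫⁻ ξ : E2, (‖ξ‖₊ : ℝ≥0∞) * ∫⁻ s in Set.Ioc (0:ℝ) z,
        ENNReal.ofReal (Real.exp (-((z - s) * ‖ξ‖))) * Bfun Θ s ξ := by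
    intro z hz
    have hzT : z ∈ Set.Icc (0:ℝ) T := ⟨hz.1.le, hz.2.trans ht.2⟩
    have h1 : Xnorm 1 (Θ z) = ∫⁻ ξ : E2, (‖ξ‖₊ : ℝ≥0∞) * ‖Θ z ξ‖₊ := by
      unfold Xnorm; congr 1; funext ξ; rw [Real.rpow_one, ofReal_norm, enorm_eq_nnnorm]
    rw [h1, ← lintegral_add_left ((measurable_nnnorm.coe_nnreal_ennreal).fun_mul (hm0 z))]
    refine lintegral_mono_ae ?_
    filter_upwards [hpt z hzT] with ξ hξ
    calc (‖ξ‖₊ : ℝ≥0∞) * ‖Θ z ξ‖₊ ≤ (‖ξ‖₊ : ℝ≥0∞) * _ := mul_le_mul_right hξ _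
      _ = _ := mul_add _ _ _
  -- abbreviations
  set P : ℝ≥0∞ := ∫⁻ ξ : E2, ENNReal.ofReal (Real.exp (-(t * ‖ξ‖))) * ‖Θ₀ ξ‖₊ with hPdef
  set Q0 : ℝ≥0∞ := ∫⁻ ξ : E2, ∫⁻ z in Set.Ioc (0:ℝ) t,
    ENNReal.ofReal (Real.exp (-((t - z) * ‖ξ‖))) * Bfun Θ z ξ with hQ0def
  set P' : ℝ≥0∞ := ∫⁻ z in Set.Ioc (0:ℝ) t, ∫⁻ ξ : E2,
    (‖ξ‖₊ : ℝ≥0∞) * (ENNReal.ofReal (Real.exp (-(z * ‖ξ‖))) * ‖Θ₀ ξ‖₊) with hP'def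
  set Q' : ℝ≥0∞ := ∫⁻ z in Set.Ioc (0:ℝ) t, ∫⁻ ξ : E2,
    (‖ξ‖₊ : ℝ≥0∞) * ∫⁻ s in Set.Ioc (0:ℝ) z,
      ENNReal.ofReal (Real.exp (-((z - s) * ‖ξ‖))) * Bfun Θ s ξ with hQ'def
  -- joint measurability of the Θ₀ term
  have hmP'joint : Measurable fun p : ℝ × E2 =>
      (‖p.2‖₊ : ℝ≥0∞) * (ENNReal.ofReal (Real.exp (-(p.1 * ‖p.2‖))) * ‖Θ₀ p.2‖₊) := by
    refine (measurable_snd.nnnorm.coe_nnreal_ennreal).mul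
      ((Measurable.ennreal_ofReal (by fun_prop)).mul ?_)
    exact (hmeas₀.comp measurable_snd).nnnorm.coe_nnreal_ennreal
  -- joint measurability of the inner Duhamel term
  have hinner : Measurable fun p : ℝ × E2 =>
      ∫⁻ s in Set.Ioc (0:ℝ) p.1,
        ENNReal.ofReal (Real.exp (-((p.1 - s) * ‖p.2‖))) * Bfun Θ s p.2 := by
    have hrepr : (fun p : ℝ × E2 => ∫⁻ s in Set.Ioc (0:ℝ) p.1,
          ENNReal.ofReal (Real.exp (-((p.1 - s) * ‖p.2‖))) * Bfun Θ s p.2)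
        = fun p : ℝ × E2 => ∫⁻ s : ℝ,
            {q : (ℝ × E2) × ℝ | 0 < q.2 ∧ q.2 ≤ q.1.1}.indicator
              (fun q => ENNReal.ofReal (Real.exp (-((q.1.1 - q.2) * ‖q.1.2‖))) *
                Bfun Θ q.2 q.1.2) (p, s) := by
      funext p
      rw [← lintegral_indicator measurableSet_Ioc]
      congr 1
    rw [hrepr]
    apply Measurable.lintegral_prod_right'
    apply Measurable.indicator
    · refine (Measurable.ennreal_ofReal (by fun_prop)).mul ?_
      exact hB.comp (f := fun q : (ℝ × E2) × ℝ => (q.2, q.1.2))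
        (measurable_snd.prodMk measurable_fst.snd)
    · exact MeasurableSet.inter (measurableSet_lt measurable_const measurable_snd)
        (measurableSet_le measurable_snd measurable_fst.fst)
  -- bound the time integral of the X¹ norm
  have hI : (∫⁻ z in Set.Ioc (0:ℝ) t, Xnorm 1 (Θ z)) ≤ P' + Q' := by
    refine le_trans (setLIntegral_mono' measurableSet_Ioc hB1) (le_of_eq ?_)
    rw [hP'def, hQ'def]
    exact lintegral_add_left hmP'joint.lintegral_prod_right' _
  -- the Θ₀ part sums to ‖Θ₀‖_{X⁰}
  have hP : P + P' = Xnorm 0 Θ₀ := by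
    have hswap : P' = ∫⁻ ξ : E2, ∫⁻ z in Set.Ioc (0:ℝ) t,
        (‖ξ‖₊ : ℝ≥0∞) * (ENNReal.ofReal (Real.exp (-(z * ‖ξ‖))) * ‖Θ₀ ξ‖₊) :=
      lintegral_lintegral_swap hmP'joint.aemeasurable
    rw [hswap, hPdef, ← lintegral_add_left (hm0 t)]
    have h0 : Xnorm 0 Θ₀ = ∫⁻ ξ : E2, (‖Θ₀ ξ‖₊ : ℝ≥0∞) := by
      unfold Xnorm; congr 1; funext ξ; rw [Real.rpow_zero, ENNReal.ofReal_one, one_mul]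
    rw [h0]
    refine lintegral_congr fun ξ => ?_
    have hrw : ∀ z : ℝ, (‖ξ‖₊ : ℝ≥0∞) * (ENNReal.ofReal (Real.exp (-(z * ‖ξ‖))) * ‖Θ₀ ξ‖₊)
        = ENNReal.ofReal (‖ξ‖ * Real.exp (-(z * ‖ξ‖))) * ‖Θ₀ ξ‖₊ := by
      intro z
      rw [← mul_assoc, ← enorm_eq_nnnorm ξ, ← ofReal_norm ξ,
        ← ENNReal.ofReal_mul (norm_nonneg ξ)]
    simp_rw [hrw]
    rw [lintegral_mul_const _ (Measurable.ennreal_ofReal (by fun_prop)), ← add_mul,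
      key0 (norm_nonneg ξ) ht.1, one_mul]
  -- the nonlinear part
  have hQ : Q0 + Q' ≤ ∫⁻ z in Set.Ioc (0:ℝ) t, Xnorm 0 (Θ z) * Xnorm 1 (Θ z) := by
    have hswap : Q' = ∫⁻ ξ : E2, ∫⁻ z in Set.Ioc (0:ℝ) t,
        (‖ξ‖₊ : ℝ≥0∞) * ∫⁻ s in Set.Ioc (0:ℝ) z,
          ENNReal.ofReal (Real.exp (-((z - s) * ‖ξ‖))) * Bfun Θ s ξ :=
      lintegral_lintegral_swap ((measurable_snd.nnnorm.coe_nnreal_ennreal).mul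
        hinner).aemeasurable
    rw [hswap, hQ0def, ← lintegral_add_left hmQ0]
    have hstep : (∫⁻ ξ : E2, ((∫⁻ s in Set.Ioc (0:ℝ) t,
          ENNReal.ofReal (Real.exp (-((t - s) * ‖ξ‖))) * Bfun Θ s ξ) +
        ∫⁻ z in Set.Ioc (0:ℝ) t, (‖ξ‖₊ : ℝ≥0∞) * ∫⁻ s in Set.Ioc (0:ℝ) z,
          ENNReal.ofReal (Real.exp (-((z - s) * ‖ξ‖))) * Bfun Θ s ξ))
        ≤ ∫⁻ ξ : E2, ∫⁻ s in Set.Ioc (0:ℝ) t, Bfun Θ s ξ := by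
      refine lintegral_mono fun ξ => ?_
      have hG : Measurable fun s : ℝ => Bfun Θ s ξ :=
        hB.comp (f := fun s : ℝ => (s, ξ)) (measurable_id.prodMk measurable_const)
      have := key1 (norm_nonneg ξ) ht.1 hG
      simpa [ofReal_norm, enorm_eq_nnnorm] using this
    refine hstep.trans (le_of_eq ?_)
    have hswap2 : (∫⁻ ξ : E2, ∫⁻ s in Set.Ioc (0:ℝ) t, Bfun Θ s ξ)
        = ∫⁻ s in Set.Ioc (0:ℝ) t, ∫⁻ ξ : E2, Bfun Θ s ξ :=
      lintegral_lintegral_swap (hB.comp (f := fun p : E2 × ℝ => (p.2, p.1))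
        (measurable_snd.prodMk measurable_fst)).aemeasurable
    rw [hswap2]
    exact lintegral_congr fun s => Bfun_lintegral hmeas s
  calc Xnorm 0 (Θ t) + ∫⁻ z in Set.Ioc (0:ℝ) t, Xnorm 1 (Θ z)
      ≤ (P + Q0) + (P' + Q') := add_le_add hA hI
    _ = (P + P') + (Q0 + Q') := by ring
    _ ≤ Xnorm 0 Θ₀ + ∫⁻ z in Set.Ioc (0:ℝ) t, Xnorm 0 (Θ z) * Xnorm 1 (Θ z) := by
        rw [hP]; exact add_le_add_right hQ _
end
end

section
/- Let 0 ≤ δ < 1, T > 0, and let Θ be a mild solution of the critical dissipative quasi-geostrophic equation on [0,T] with data Θ₀ such that sup_{0≤t≤T} ‖Θ(t)‖_{X⁰} < ∞, sup_{0≤t≤T} ‖Θ(t)‖_{X^{−δ}} < ∞ and ∫₀^T ‖Θ(t)‖_{X^{1−δ}} dt < ∞. Then for every t ∈ [0,T], ‖Θ(t)‖_{X^{−δ}} + ∫₀^t ‖Θ(z)‖_{X^{1−δ}} dz ≤ ‖Θ₀‖_{X^{−δ}} + 2^{2−δ} (sup_{0≤z≤t} ‖Θ(z)‖_{X⁰})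 ∫₀^t ‖Θ(z)‖_{X^{1−δ}} dz. -/
open MeasureTheory Filter
open scoped ENNReal NNReal

set_option maxHeartbeats 1000000
noncomputable section

lemma kernel_abs_le (ξ η : E2) : |ξ 0 * η 1 - ξ 1 * η 0| ≤ ‖ξ‖ * ‖η‖ := by
  have hξ : ‖ξ‖ = Real.sqrt (ξ 0 ^ 2 + ξ 1 ^ 2) := by
    rw [EuclideanSpace.norm_eq]; simp [Fin.sum_univ_two, Real.norm_eq_abs, sq_abs]
  have hη : ‖η‖ = Real.sqrt (η 0 ^ 2 + η 1 ^ 2) := by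
    rw [EuclideanSpace.norm_eq]; simp [Fin.sum_univ_two, Real.norm_eq_abs, sq_abs]
  rw [hξ, hη, ← Real.sqrt_mul (by positivity)]
  rw [← Real.sqrt_sq_eq_abs]
  apply Real.sqrt_le_sqrt
  nlinarith [sq_nonneg (ξ 0 * η 0 + ξ 1 * η 1)]

lemma kernel_div_le (ξ η : E2) : |(ξ 0 * η 1 - ξ 1 * η 0) / ‖η‖| ≤ ‖ξ‖ := by
  rcases eq_or_ne η 0 with rfl | hη
  · simp [norm_nonneg]
  · rw [abs_div, abs_of_nonneg (norm_nonneg η), div_le_iff₀ (norm_pos_iff.mpr hη)]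
    exact kernel_abs_le ξ η

lemma exp_integral (r s t : ℝ) :
    ∫ z in s..t, r * Real.exp (-((z - s) * r)) = 1 - Real.exp (-((t - s) * r)) := by
  have h : ∀ z ∈ Set.uIcc s t, HasDerivAt (fun z => -Real.exp (-((z - s) * r)))
      (r * Real.exp (-((z - s) * r))) z := by
    intro z _
    have h1 : HasDerivAt (fun z : ℝ => -((z - s) * r)) (-r) z := by
      exact ((((hasDerivAt_id z).sub_const s).mul_const r).neg).congr_deriv (by ring)
    have := h1.exp.neg
    exact this.congr_deriv (by ring)
  have hcont : IntervalIntegrable (fun z => r * Real.exp (-((z - s) * r))) volume s t :=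
    (by continuity : Continuous fun z => r * Real.exp (-((z - s) * r))).intervalIntegrable s t
  have := intervalIntegral.integral_eq_sub_of_hasDerivAt h hcont
  rw [this]; simp; ring

lemma coord_measurable (i : Fin 2) : Measurable (fun ξ : E2 => ξ i) :=
  (EuclideanSpace.proj (𝕜 := ℝ) i).continuous.measurable

lemma qgn_integrand_measurable {Θ : ℝ → E2 → ℂ} (hmeas : Measurable (Function.uncurry Θ)) :
    Measurable (fun p : (ℝ × E2) × E2 =>
      (((p.1.2 0 * p.2 1 - p.1.2 1 * p.2 0) / ‖p.2‖ : ℝ) : ℂ) * Θ p.1.1 (p.1.2 - p.2) * Θ p.1.1 p.2) := by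
  have h1 : Measurable (fun p : (ℝ × E2) × E2 => Θ p.1.1 (p.1.2 - p.2)) :=
    hmeas.comp ((measurable_fst.comp measurable_fst).prodMk
      ((measurable_snd.comp measurable_fst).sub measurable_snd))
  have h2 : Measurable (fun p : (ℝ × E2) × E2 => Θ p.1.1 p.2) :=
    hmeas.comp ((measurable_fst.comp measurable_fst).prodMk measurable_snd)
  have hk : Measurable (fun p : (ℝ × E2) × E2 =>
      (((p.1.2 0 * p.2 1 - p.1.2 1 * p.2 0) / ‖p.2‖ : ℝ) : ℂ)) := by
    apply Complex.measurable_ofReal.comp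
    apply Measurable.div
    · exact (((coord_measurable 0).comp (measurable_snd.comp measurable_fst)).mul
        ((coord_measurable 1).comp measurable_snd)).sub
        (((coord_measurable 1).comp (measurable_snd.comp measurable_fst)).mul
        ((coord_measurable 0).comp measurable_snd))
    · exact measurable_snd.norm
  exact (hk.mul h1).mul h2

lemma qgn_measurable {Θ : ℝ → E2 → ℂ} (hmeas : Measurable (Function.uncurry Θ)) :
    StronglyMeasurable (Function.uncurry (QGN Θ)) := by
  exact (qgn_integrand_measurable hmeas).stronglyMeasurable.integral_prod_right'

def DuRHS (Θ : ℝ → E2 → ℂ) (Θ₀ : E2 → ℂ) (p : E2 × ℝ) : ℂ :=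
  ((Real.exp (-(p.2 * ‖p.1‖)) : ℝ) : ℂ) * Θ₀ p.1 +
  ∫ s : ℝ, Set.indicator (Set.Ioc 0 p.2)
    (fun s => ((Real.exp (-((p.2 - s) * ‖p.1‖)) : ℝ) : ℂ) * QGN Θ s p.1) s

lemma intervalIntegral_eq_indicator (f : ℝ → ℂ) {z : ℝ} (hz : 0 ≤ z) :
    ∫ s in (0:ℝ)..z, f s = ∫ s, (Set.Ioc 0 z).indicator f s := by
  rw [intervalIntegral.integral_of_le hz, ← integral_indicator measurableSet_Ioc]

lemma duRHS_eq {Θ : ℝ → E2 → ℂ} {Θ₀ : E2 → ℂ} {ξ : E2} {z : ℝ} (hz : 0 ≤ z) :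
    DuRHS Θ Θ₀ (ξ, z) = ((Real.exp (-(z * ‖ξ‖)) : ℝ) : ℂ) * Θ₀ ξ +
      ∫ s in (0:ℝ)..z, ((Real.exp (-((z - s) * ‖ξ‖)) : ℝ) : ℂ) * QGN Θ s ξ := by
  rw [DuRHS, intervalIntegral_eq_indicator _ hz]

lemma duRHS_measurable {Θ : ℝ → E2 → ℂ} {Θ₀ : E2 → ℂ}
    (hmeas : Measurable (Function.uncurry Θ)) (hmeas₀ : Measurable Θ₀) :
    StronglyMeasurable (DuRHS Θ Θ₀) := by
  apply StronglyMeasurable.add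
  · apply Measurable.stronglyMeasurable
    exact (Complex.measurable_ofReal.comp (Real.measurable_exp.comp
      ((measurable_snd.mul measurable_fst.norm).neg))).mul (hmeas₀.comp measurable_fst)
  · have hset : MeasurableSet {q : (E2 × ℝ) × ℝ | q.2 ∈ Set.Ioc 0 q.1.2} := by
      apply MeasurableSet.inter
      · exact measurableSet_lt measurable_const measurable_snd
      · exact measurableSet_le measurable_snd (measurable_fst.snd)
    have hg : Measurable (fun q : (E2 × ℝ) × ℝ =>
        ((Real.exp (-((q.1.2 - q.2) * ‖q.1.1‖)) : ℝ) : ℂ) * QGN Θ q.2 q.1.1) := by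
      refine Measurable.mul ?_ ?_
      · exact Complex.measurable_ofReal.comp (Real.measurable_exp.comp
          (((measurable_fst.snd.sub measurable_snd).mul measurable_fst.fst.norm).neg))
      · have e : (fun q : (E2 × ℝ) × ℝ => QGN Θ q.2 q.1.1) =
            Function.uncurry (QGN Θ) ∘ (fun q => (q.2, q.1.1)) := rfl
        rw [e]
        exact (qgn_measurable hmeas).measurable.comp (measurable_snd.prodMk measurable_fst.fst)
    have hf : StronglyMeasurable (fun q : (E2 × ℝ) × ℝ =>
        Set.indicator (Set.Ioc 0 q.1.2)
          (fun s => ((Real.exp (-((q.1.2 - s) * ‖q.1.1‖)) : ℝ) : ℂ) * QGN Θ s q.1.1) q.2) := by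
      have : (fun q : (E2 × ℝ) × ℝ =>
          Set.indicator (Set.Ioc 0 q.1.2)
            (fun s => ((Real.exp (-((q.1.2 - s) * ‖q.1.1‖)) : ℝ) : ℂ) * QGN Θ s q.1.1) q.2)
          = fun q => if q.2 ∈ Set.Ioc 0 q.1.2 then
              ((Real.exp (-((q.1.2 - q.2) * ‖q.1.1‖)) : ℝ) : ℂ) * QGN Θ q.2 q.1.1 else 0 := by
        funext q; rw [Set.indicator_apply]
      rw [this]
      exact (Measurable.ite hset hg measurable_const).stronglyMeasurable
    exact hf.integral_prod_right'

lemma joint_ae {Θ : ℝ → E2 → ℂ} {Θ₀ : E2 → ℂ} {T : ℝ}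
    (hmeas : Measurable (Function.uncurry Θ)) (hmeas₀ : Measurable Θ₀)
    (hmild : IsMildSolutionOn Θ Θ₀ T) {t : ℝ} (ht : t ∈ Set.Icc (0:ℝ) T) :
    ∀ᵐ ξ : E2 ∂volume, ∀ᵐ z ∂(volume.restrict (Set.Ioc (0:ℝ) t)),
      Θ z ξ = ((Real.exp (-(z * ‖ξ‖)) : ℝ) : ℂ) * Θ₀ ξ +
        ∫ s in (0:ℝ)..z, ((Real.exp (-((z - s) * ‖ξ‖)) : ℝ) : ℂ) * QGN Θ s ξ := by
  have hΘ : Measurable (fun p : E2 × ℝ => Θ p.2 p.1) := by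
    have e : (fun p : E2 × ℝ => Θ p.2 p.1) = Function.uncurry Θ ∘ (fun p => (p.2, p.1)) := rfl
    rw [e]; exact hmeas.comp (measurable_snd.prodMk measurable_fst)
  have hD := (duRHS_measurable hmeas hmeas₀ (Θ₀ := Θ₀)).measurable
  have hBad : MeasurableSet {p : E2 × ℝ | ¬ (Θ p.2 p.1 = DuRHS Θ Θ₀ p)} :=
    (measurableSet_eq_fun hΘ hD).compl
  set μ := (volume : Measure E2).prod (volume.restrict (Set.Ioc (0:ℝ) t)) with hμ
  have hμBad : μ {p : E2 × ℝ | ¬ (Θ p.2 p.1 = DuRHS Θ Θ₀ p)} = 0 := by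
    rw [hμ, Measure.prod_apply_symm hBad]
    have h0 : ∀ᵐ z ∂(volume.restrict (Set.Ioc (0:ℝ) t)),
        volume ((fun ξ : E2 => (ξ, z)) ⁻¹' {p : E2 × ℝ | ¬ (Θ p.2 p.1 = DuRHS Θ Θ₀ p)}) = 0 := by
      rw [ae_restrict_iff' measurableSet_Ioc]
      refine Filter.Eventually.of_forall (fun z hz => ?_)
      have hz0 : (0:ℝ) ≤ z := hz.1.le
      have hmz := hmild z ⟨hz0, hz.2.trans ht.2⟩
      have : ∀ᵐ ξ : E2 ∂volume, Θ z ξ = DuRHS Θ Θ₀ (ξ, z) := by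
        filter_upwards [hmz] with ξ hξ
        rw [duRHS_eq hz0]; exact hξ
      simpa [ae_iff, Set.preimage_setOf_eq] using this
    calc ∫⁻ z in Set.Ioc (0:ℝ) t,
          volume ((fun ξ : E2 => (ξ, z)) ⁻¹' {p : E2 × ℝ | ¬ (Θ p.2 p.1 = DuRHS Θ Θ₀ p)})
        = ∫⁻ _ in Set.Ioc (0:ℝ) t, (0:ℝ≥0∞) := lintegral_congr_ae h0
      _ = 0 := lintegral_zero
  have hae : ∀ᵐ p : E2 × ℝ ∂μ, Θ p.2 p.1 = DuRHS Θ Θ₀ p := by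
    rw [ae_iff]; exact hμBad
  have := Measure.ae_ae_of_ae_prod hae
  filter_upwards [this] with ξ hξ
  have hz0 : ∀ᵐ z ∂(volume.restrict (Set.Ioc (0:ℝ) t)), (0:ℝ) ≤ z :=
    (ae_restrict_iff' measurableSet_Ioc).2 (Filter.Eventually.of_forall fun z hz => hz.1.le)
  filter_upwards [hξ, hz0] with z hz hz0'
  rw [hz, duRHS_eq hz0']

lemma ofReal_exp_add {x : ℝ} (hx : 0 ≤ x) :
    ENNReal.ofReal (Real.exp (-x)) + ENNReal.ofReal (1 - Real.exp (-x)) = 1 := by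
  rw [← ENNReal.ofReal_add (Real.exp_nonneg _)
    (by simpa using Real.exp_le_one_iff.mpr (neg_nonpos.mpr hx))]
  norm_num

lemma expInt {r : ℝ} (hr0 : 0 ≤ r) {a b : ℝ} (hab : a ≤ b) :
    ∫⁻ z in Set.Ioc a b, ENNReal.ofReal (r * Real.exp (-((z - a) * r)))
      = ENNReal.ofReal (1 - Real.exp (-((b - a) * r))) := by
  rw [← ofReal_integral_eq_lintegral_ofReal]
  · rw [← intervalIntegral.integral_of_le hab, exp_integral]
  · exact ((by continuity : Continuous fun z : ℝ => r * Real.exp (-((z - a) * r))).integrableOn_Icc).mono_set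
      Set.Ioc_subset_Icc_self
  · exact Filter.Eventually.of_forall fun z => by positivity

lemma duhamel_bound {Θ : ℝ → E2 → ℂ} {Θ₀ : E2 → ℂ} {z : ℝ} (hz : 0 ≤ z) {ξ : E2}
    (h : Θ z ξ = ((Real.exp (-(z * ‖ξ‖)) : ℝ) : ℂ) * Θ₀ ξ +
      ∫ s in (0:ℝ)..z, ((Real.exp (-((z - s) * ‖ξ‖)) : ℝ) : ℂ) * QGN Θ s ξ) :
    (‖Θ z ξ‖₊ : ℝ≥0∞) ≤ ENNReal.ofReal (Real.exp (-(z * ‖ξ‖))) * ‖Θ₀ ξ‖₊ +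
      ∫⁻ s in Set.Ioc (0:ℝ) z, ENNReal.ofReal (Real.exp (-((z - s) * ‖ξ‖))) * ‖QGN Θ s ξ‖₊ := by
  rw [h]
  have htri : (‖((Real.exp (-(z * ‖ξ‖)) : ℝ) : ℂ) * Θ₀ ξ +
      ∫ s in (0:ℝ)..z, ((Real.exp (-((z - s) * ‖ξ‖)) : ℝ) : ℂ) * QGN Θ s ξ‖₊ : ℝ≥0∞)
      ≤ (‖((Real.exp (-(z * ‖ξ‖)) : ℝ) : ℂ) * Θ₀ ξ‖₊ : ℝ≥0∞) +
        (‖∫ s in (0:ℝ)..z, ((Real.exp (-((z - s) * ‖ξ‖)) : ℝ) : ℂ) * QGN Θ s ξ‖₊ : ℝ≥0∞) := by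
    exact_mod_cast nnnorm_add_le _ _
  have cnn : ∀ a : ℝ, 0 ≤ a → (‖(a:ℂ)‖₊ : ℝ≥0∞) = ENNReal.ofReal a := fun a ha => by
    rw [show ‖(a:ℂ)‖₊ = ‖a‖₊ from by simp, ]; exact Real.enorm_eq_ofReal ha
  refine le_trans htri (add_le_add ?_ ?_)
  · rw [nnnorm_mul, ENNReal.coe_mul, cnn _ (Real.exp_nonneg _)]
  · rw [intervalIntegral.integral_of_le hz]
    refine le_trans (enorm_integral_le_lintegral_enorm _) (le_of_eq ?_)
    refine lintegral_congr fun s => ?_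
    rw [enorm_eq_nnnorm, nnnorm_mul, ENNReal.coe_mul, cnn _ (Real.exp_nonneg _)]

lemma pointwise_master {Θ : ℝ → E2 → ℂ} {Θ₀ : E2 → ℂ} {t : ℝ} (ht0 : 0 ≤ t) {ξ : E2}
    (hN : Measurable fun s => QGN Θ s ξ)
    (hae : ∀ᵐ z ∂(volume.restrict (Set.Ioc (0:ℝ) t)),
      (‖Θ z ξ‖₊ : ℝ≥0∞) ≤ ENNReal.ofReal (Real.exp (-(z * ‖ξ‖))) * ‖Θ₀ ξ‖₊ +
        ∫⁻ s in Set.Ioc (0:ℝ) z, ENNReal.ofReal (Real.exp (-((z - s) * ‖ξ‖))) * ‖QGN Θ s ξ‖₊)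
    (hprt : (‖Θ t ξ‖₊ : ℝ≥0∞) ≤ ENNReal.ofReal (Real.exp (-(t * ‖ξ‖))) * ‖Θ₀ ξ‖₊ +
        ∫⁻ s in Set.Ioc (0:ℝ) t, ENNReal.ofReal (Real.exp (-((t - s) * ‖ξ‖))) * ‖QGN Θ s ξ‖₊) :
    (‖Θ t ξ‖₊ : ℝ≥0∞) + ∫⁻ z in Set.Ioc (0:ℝ) t, ENNReal.ofReal ‖ξ‖ * ‖Θ z ξ‖₊
      ≤ (‖Θ₀ ξ‖₊ : ℝ≥0∞) + ∫⁻ s in Set.Ioc (0:ℝ) t, ‖QGN Θ s ξ‖₊ := by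
  set r := ‖ξ‖ with hrdef
  have hr0 : 0 ≤ r := norm_nonneg ξ
  have hNe : Measurable fun s => (‖QGN Θ s ξ‖₊ : ℝ≥0∞) := hN.enorm
  set H : ℝ → ℝ → ℝ≥0∞ := fun z s => (Set.Ioc (0:ℝ) z).indicator
      (fun s => ENNReal.ofReal (r * Real.exp (-((z - s) * r))) * ‖QGN Θ s ξ‖₊) s with hH
  have hHmeas : Measurable (Function.uncurry H) := by
    have e : Function.uncurry H = fun q : ℝ × ℝ => if q.2 ∈ Set.Ioc (0:ℝ) q.1 then
        ENNReal.ofReal (r * Real.exp (-((q.1 - q.2) * r))) * ‖QGN Θ q.2 ξ‖₊ else 0 := by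
      funext q; simp [hH, Function.uncurry, Set.indicator_apply]
    rw [e]
    refine Measurable.ite ?_ ?_ measurable_const
    · exact (measurableSet_lt measurable_const measurable_snd).inter
        (measurableSet_le measurable_snd measurable_fst)
    · exact (ENNReal.measurable_ofReal.comp (by continuity : Continuous fun q : ℝ × ℝ =>
        r * Real.exp (-((q.1 - q.2) * r))).measurable).mul (hNe.comp measurable_snd)
  have hAmeas : Measurable fun z => ENNReal.ofReal (r * Real.exp (-(z * r))) * (‖Θ₀ ξ‖₊ : ℝ≥0∞) :=
    (ENNReal.measurable_ofReal.comp
      (by continuity : Continuous fun z : ℝ => r * Real.exp (-(z * r))).measurable).mul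
      measurable_const
  have step1 : ∫⁻ z in Set.Ioc (0:ℝ) t, ENNReal.ofReal r * ‖Θ z ξ‖₊
      ≤ (∫⁻ z in Set.Ioc (0:ℝ) t, ENNReal.ofReal (r * Real.exp (-(z * r))) * ‖Θ₀ ξ‖₊)
        + ∫⁻ z in Set.Ioc (0:ℝ) t, ∫⁻ s, H z s := by
    rw [← lintegral_add_left hAmeas]
    refine lintegral_mono_ae ?_
    filter_upwards [hae] with z hz
    calc ENNReal.ofReal r * (‖Θ z ξ‖₊ : ℝ≥0∞)
        ≤ ENNReal.ofReal r * (ENNReal.ofReal (Real.exp (-(z * r))) * ‖Θ₀ ξ‖₊ +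
            ∫⁻ s in Set.Ioc (0:ℝ) z, ENNReal.ofReal (Real.exp (-((z - s) * r))) * ‖QGN Θ s ξ‖₊) :=
          mul_le_mul_right hz _
      _ = ENNReal.ofReal (r * Real.exp (-(z * r))) * ‖Θ₀ ξ‖₊ + ∫⁻ s, H z s := by
          rw [mul_add]
          congr 1
          · rw [← mul_assoc, ← ENNReal.ofReal_mul hr0]
          · rw [← lintegral_const_mul' _ _ ENNReal.ofReal_ne_top]
            simp only [hH]
            rw [lintegral_indicator measurableSet_Ioc]
            refine setLIntegral_congr_fun measurableSet_Ioc
              (fun s _ => ?_)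
            rw [← mul_assoc, ← ENNReal.ofReal_mul hr0]
  have hA : ∫⁻ z in Set.Ioc (0:ℝ) t, ENNReal.ofReal (r * Real.exp (-(z * r))) * (‖Θ₀ ξ‖₊ : ℝ≥0∞)
      = ENNReal.ofReal (1 - Real.exp (-(t * r))) * ‖Θ₀ ξ‖₊ := by
    rw [lintegral_mul_const' _ _ ENNReal.coe_ne_top]
    congr 1
    simpa using expInt hr0 ht0 (a := 0) (b := t)
  have hB : ∫⁻ z in Set.Ioc (0:ℝ) t, ∫⁻ s, H z s
      ≤ ∫⁻ s in Set.Ioc (0:ℝ) t, ENNReal.ofReal (1 - Real.exp (-((t - s) * r))) * ‖QGN Θ s ξ‖₊ := by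
    rw [lintegral_lintegral_swap hHmeas.aemeasurable]
    rw [← lintegral_indicator (f := fun s => ENNReal.ofReal (1 - Real.exp (-((t - s) * r))) * (‖QGN Θ s ξ‖₊ : ℝ≥0∞)) measurableSet_Ioc]
    refine lintegral_mono fun s => ?_
    by_cases hs : s ∈ Set.Ioc (0:ℝ) t
    · rw [Set.indicator_of_mem hs]
      have hcong : ∫⁻ z in Set.Ioc (0:ℝ) t, H z s
          = ∫⁻ z in Set.Ioc (0:ℝ) t,
              (Set.Icc s t).indicator (fun z => ENNReal.ofReal (r * Real.exp (-((z - s) * r)))) z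
                * ‖QGN Θ s ξ‖₊ := by
        refine setLIntegral_congr_fun measurableSet_Ioc
          (fun z hz => ?_)
        by_cases hsz : s ≤ z
        · rw [hH]; simp only
          rw [Set.indicator_of_mem (show s ∈ Set.Ioc (0:ℝ) z from ⟨hs.1, hsz⟩),
            Set.indicator_of_mem (show z ∈ Set.Icc s t from ⟨hsz, hz.2⟩)]
        · rw [hH]; simp only
          rw [Set.indicator_of_notMem (show s ∉ Set.Ioc (0:ℝ) z from fun h => hsz h.2),
            Set.indicator_of_notMem (show z ∉ Set.Icc s t from fun h => hsz h.1), zero_mul]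
      rw [hcong]
      calc ∫⁻ z in Set.Ioc (0:ℝ) t,
              (Set.Icc s t).indicator (fun z => ENNReal.ofReal (r * Real.exp (-((z - s) * r)))) z
                * ‖QGN Θ s ξ‖₊
          ≤ ∫⁻ z, (Set.Icc s t).indicator
              (fun z => ENNReal.ofReal (r * Real.exp (-((z - s) * r)))) z * ‖QGN Θ s ξ‖₊ :=
            setLIntegral_le_lintegral _ _
        _ = (∫⁻ z, (Set.Icc s t).indicator
              (fun z => ENNReal.ofReal (r * Real.exp (-((z - s) * r)))) z) * ‖QGN Θ s ξ‖₊ :=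
            lintegral_mul_const' _ _ ENNReal.coe_ne_top
        _ = (∫⁻ z in Set.Icc s t, ENNReal.ofReal (r * Real.exp (-((z - s) * r)))) * ‖QGN Θ s ξ‖₊ := by
            rw [lintegral_indicator measurableSet_Icc]
        _ = ENNReal.ofReal (1 - Real.exp (-((t - s) * r))) * ‖QGN Θ s ξ‖₊ := by
            rw [show (volume.restrict (Set.Icc s t)) = volume.restrict (Set.Ioc s t) from
              (Measure.restrict_congr_set Ioc_ae_eq_Icc).symm, expInt hr0 hs.2]
    · rw [Set.indicator_of_notMem hs]
      have hzero : ∫⁻ z in Set.Ioc (0:ℝ) t, H z s = 0 := by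
        rw [setLIntegral_congr_fun measurableSet_Ioc
          (fun z hz => ?_), lintegral_zero]
        rw [hH]; simp only
        exact Set.indicator_of_notMem (fun hmem => hs ⟨hmem.1, hmem.2.trans hz.2⟩) _
      exact hzero.le
  have hJmeas : Measurable fun s => ENNReal.ofReal (Real.exp (-((t - s) * r))) * (‖QGN Θ s ξ‖₊ : ℝ≥0∞) :=
    (ENNReal.measurable_ofReal.comp
      (by continuity : Continuous fun s : ℝ => Real.exp (-((t - s) * r))).measurable).mul hNe
  calc (‖Θ t ξ‖₊ : ℝ≥0∞) + ∫⁻ z in Set.Ioc (0:ℝ) t, ENNReal.ofReal r * ‖Θ z ξ‖₊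
      ≤ (ENNReal.ofReal (Real.exp (-(t * r))) * ‖Θ₀ ξ‖₊ +
          ∫⁻ s in Set.Ioc (0:ℝ) t, ENNReal.ofReal (Real.exp (-((t - s) * r))) * ‖QGN Θ s ξ‖₊)
        + (ENNReal.ofReal (1 - Real.exp (-(t * r))) * ‖Θ₀ ξ‖₊ +
          ∫⁻ s in Set.Ioc (0:ℝ) t, ENNReal.ofReal (1 - Real.exp (-((t - s) * r))) * ‖QGN Θ s ξ‖₊) :=
        add_le_add hprt (step1.trans (add_le_add hA.le hB))
    _ = (ENNReal.ofReal (Real.exp (-(t * r))) * ‖Θ₀ ξ‖₊ +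
          ENNReal.ofReal (1 - Real.exp (-(t * r))) * ‖Θ₀ ξ‖₊)
        + ((∫⁻ s in Set.Ioc (0:ℝ) t, ENNReal.ofReal (Real.exp (-((t - s) * r))) * ‖QGN Θ s ξ‖₊)
          + ∫⁻ s in Set.Ioc (0:ℝ) t, ENNReal.ofReal (1 - Real.exp (-((t - s) * r))) * ‖QGN Θ s ξ‖₊) :=
        add_add_add_comm _ _ _ _
    _ = (‖Θ₀ ξ‖₊ : ℝ≥0∞) + ∫⁻ s in Set.Ioc (0:ℝ) t, ‖QGN Θ s ξ‖₊ := by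
        congr 1
        · rw [← add_mul, ofReal_exp_add (mul_nonneg ht0 hr0), one_mul]
        · rw [← lintegral_add_left hJmeas]
          refine setLIntegral_congr_fun measurableSet_Ioc
            (fun s hs => ?_)
          rw [← add_mul, ofReal_exp_add (mul_nonneg (sub_nonneg.2 hs.2) hr0), one_mul]

lemma ofReal_rpow' {a : ℝ} (ha : 0 ≤ a) {p : ℝ} (hp : 0 < p) :
    (ENNReal.ofReal a) ^ p = ENNReal.ofReal (a ^ p) := by
  rcases eq_or_lt_of_le ha with h | h
  · rw [← h]; simp [ENNReal.zero_rpow_of_pos hp, Real.zero_rpow hp.ne']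
  · exact ENNReal.ofReal_rpow_of_pos h

lemma ae_ne_zero : ∀ᵐ ξ : E2 ∂volume, ξ ≠ 0 := by
  have : volume ({0} : Set E2) = 0 := measure_singleton 0
  rw [ae_iff]
  simpa [Set.setOf_eq_eq_singleton'] using this

lemma rpow_triangle {p : ℝ} (hp0 : 0 < p) (hp1 : p ≤ 1) (ξ η : E2) :
    ENNReal.ofReal (‖ξ‖ ^ p) ≤ ENNReal.ofReal (‖ξ - η‖ ^ p) + ENNReal.ofReal (‖η‖ ^ p) := by
  have htri : ‖ξ‖ ≤ ‖ξ - η‖ + ‖η‖ := by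
    calc ‖ξ‖ = ‖(ξ - η) + η‖ := by rw [sub_add_cancel]
    _ ≤ ‖ξ - η‖ + ‖η‖ := norm_add_le _ _
  calc ENNReal.ofReal (‖ξ‖ ^ p) = (ENNReal.ofReal ‖ξ‖) ^ p := (ofReal_rpow' (norm_nonneg _) hp0).symm
    _ ≤ (ENNReal.ofReal ‖ξ - η‖ + ENNReal.ofReal ‖η‖) ^ p := by
        refine ENNReal.rpow_le_rpow ?_ hp0.le
        rw [← ENNReal.ofReal_add (norm_nonneg _) (norm_nonneg _)]
        exact ENNReal.ofReal_le_ofReal htri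
    _ ≤ (ENNReal.ofReal ‖ξ - η‖) ^ p + (ENNReal.ofReal ‖η‖) ^ p :=
        ENNReal.rpow_add_le_add_rpow _ _ hp0.le hp1
    _ = ENNReal.ofReal (‖ξ - η‖ ^ p) + ENNReal.ofReal (‖η‖ ^ p) := by
        rw [ofReal_rpow' (norm_nonneg _) hp0, ofReal_rpow' (norm_nonneg _) hp0]

lemma nonlinear_estimate {Θ : ℝ → E2 → ℂ} (hmeas : Measurable (Function.uncurry Θ))
    {δ : ℝ} (hδ0 : 0 ≤ δ) (hδ1 : δ < 1) (z : ℝ) :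
    ∫⁻ ξ : E2, ENNReal.ofReal (‖ξ‖ ^ (-δ)) * ‖QGN Θ z ξ‖₊
      ≤ 2 * Xnorm 0 (Θ z) * Xnorm (1 - δ) (Θ z) := by
  set p := 1 - δ with hp
  have hp0 : 0 < p := by linarith
  have hp1 : p ≤ 1 := by linarith
  have hFz : Measurable (Θ z) := by
    have e : Θ z = Function.uncurry Θ ∘ (fun ξ => (z, ξ)) := rfl
    rw [e]; exact hmeas.comp (measurable_const.prodMk measurable_id)
  have hF : Measurable fun η : E2 => (‖Θ z η‖₊ : ℝ≥0∞) := hFz.enorm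
  have hg : Measurable fun x : E2 => ENNReal.ofReal (‖x‖ ^ p) * (‖Θ z x‖₊ : ℝ≥0∞) :=
    (ENNReal.measurable_ofReal.comp (measurable_norm.pow_const p)).mul hF
  -- pointwise bound
  have hpt : ∀ᵐ ξ : E2 ∂volume, ENNReal.ofReal (‖ξ‖ ^ (-δ)) * ‖QGN Θ z ξ‖₊
      ≤ ∫⁻ η : E2, (ENNReal.ofReal (‖ξ - η‖ ^ p) + ENNReal.ofReal (‖η‖ ^ p)) *
          ((‖Θ z (ξ - η)‖₊ : ℝ≥0∞) * ‖Θ z η‖₊) := by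
    filter_upwards [ae_ne_zero] with ξ hξ
    have hrpos : 0 < ‖ξ‖ := norm_pos_iff.mpr hξ
    have h1 : (‖QGN Θ z ξ‖₊ : ℝ≥0∞)
        ≤ ∫⁻ η : E2, ENNReal.ofReal ‖ξ‖ * ((‖Θ z (ξ - η)‖₊ : ℝ≥0∞) * ‖Θ z η‖₊) := by
      refine le_trans (enorm_integral_le_lintegral_enorm _) (lintegral_mono fun η => ?_)
      rw [enorm_eq_nnnorm, nnnorm_mul, nnnorm_mul, ENNReal.coe_mul, ENNReal.coe_mul, mul_assoc]
      refine mul_le_mul_left ?_ _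
      rw [← enorm_eq_nnnorm, ← ofReal_norm_eq_enorm]
      refine ENNReal.ofReal_le_ofReal ?_
      rw [show ‖(((ξ 0 * η 1 - ξ 1 * η 0) / ‖η‖ : ℝ) : ℂ)‖ = |(ξ 0 * η 1 - ξ 1 * η 0) / ‖η‖| from by
        rw [Complex.norm_real, Real.norm_eq_abs]]
      exact kernel_div_le ξ η
    calc ENNReal.ofReal (‖ξ‖ ^ (-δ)) * (‖QGN Θ z ξ‖₊ : ℝ≥0∞)
        ≤ ENNReal.ofReal (‖ξ‖ ^ (-δ)) *
            ∫⁻ η : E2, ENNReal.ofReal ‖ξ‖ * ((‖Θ z (ξ - η)‖₊ : ℝ≥0∞) * ‖Θ z η‖₊) :=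
          mul_le_mul_right h1 _
      _ = ∫⁻ η : E2, ENNReal.ofReal (‖ξ‖ ^ p) * ((‖Θ z (ξ - η)‖₊ : ℝ≥0∞) * ‖Θ z η‖₊) := by
          rw [← lintegral_const_mul' _ _ ENNReal.ofReal_ne_top]
          refine lintegral_congr fun η => ?_
          rw [← mul_assoc, ← ENNReal.ofReal_mul (Real.rpow_nonneg (norm_nonneg _) _)]
          congr 2
          show ‖ξ‖ ^ (-δ) * ‖ξ‖ = ‖ξ‖ ^ p
          calc ‖ξ‖ ^ (-δ) * ‖ξ‖ = ‖ξ‖ ^ (-δ) * ‖ξ‖ ^ (1:ℝ) := by rw [Real.rpow_one]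
            _ = ‖ξ‖ ^ (-δ + 1) := (Real.rpow_add hrpos _ _).symm
            _ = ‖ξ‖ ^ p := by rw [show -δ + 1 = 1 - δ from by ring, ← hp]
      _ ≤ ∫⁻ η : E2, (ENNReal.ofReal (‖ξ - η‖ ^ p) + ENNReal.ofReal (‖η‖ ^ p)) *
            ((‖Θ z (ξ - η)‖₊ : ℝ≥0∞) * ‖Θ z η‖₊) :=
          lintegral_mono fun η => mul_le_mul_left (rpow_triangle hp0 hp1 ξ η) _
  -- integrate
  have hG1meas : Measurable (fun q : E2 × E2 =>
      ENNReal.ofReal (‖q.1 - q.2‖ ^ p) * (‖Θ z (q.1 - q.2)‖₊ : ℝ≥0∞) * ‖Θ z q.2‖₊) :=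
    ((hg.comp (measurable_fst.sub measurable_snd))).mul (hF.comp measurable_snd)
  have hG2meas : Measurable (fun q : E2 × E2 =>
      (ENNReal.ofReal (‖q.2‖ ^ p) * (‖Θ z q.2‖₊ : ℝ≥0∞)) * ‖Θ z (q.1 - q.2)‖₊) :=
    (hg.comp measurable_snd).mul ((hF.comp (measurable_fst.sub measurable_snd)))
  have hX0 : Xnorm 0 (Θ z) = ∫⁻ η : E2, (‖Θ z η‖₊ : ℝ≥0∞) := by
    refine lintegral_congr fun η => ?_
    rw [Real.rpow_zero, ENNReal.ofReal_one, one_mul]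
  calc ∫⁻ ξ : E2, ENNReal.ofReal (‖ξ‖ ^ (-δ)) * ‖QGN Θ z ξ‖₊
      ≤ ∫⁻ ξ : E2, ∫⁻ η : E2, (ENNReal.ofReal (‖ξ - η‖ ^ p) + ENNReal.ofReal (‖η‖ ^ p)) *
          ((‖Θ z (ξ - η)‖₊ : ℝ≥0∞) * ‖Θ z η‖₊) := lintegral_mono_ae hpt
    _ = (∫⁻ ξ : E2, ∫⁻ η : E2,
          ENNReal.ofReal (‖ξ - η‖ ^ p) * (‖Θ z (ξ - η)‖₊ : ℝ≥0∞) * ‖Θ z η‖₊)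
        + ∫⁻ ξ : E2, ∫⁻ η : E2,
          (ENNReal.ofReal (‖η‖ ^ p) * (‖Θ z η‖₊ : ℝ≥0∞)) * ‖Θ z (ξ - η)‖₊ := by
        rw [← lintegral_add_left (hG1meas.lintegral_prod_right')]
        refine lintegral_congr fun ξ => ?_
        have e1 : (fun η : E2 => ENNReal.ofReal (‖ξ - η‖ ^ p) * (‖Θ z (ξ - η)‖₊ : ℝ≥0∞))
            = (fun x => ENNReal.ofReal (‖x‖ ^ p) * (‖Θ z x‖₊ : ℝ≥0∞)) ∘ (fun η => ξ - η) := rfl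
        have hm1 : Measurable fun η : E2 =>
            ENNReal.ofReal (‖ξ - η‖ ^ p) * (‖Θ z (ξ - η)‖₊ : ℝ≥0∞) := by
          rw [e1]; exact hg.comp (measurable_const.sub measurable_id)
        rw [← lintegral_add_left (by exact hm1.mul hF : Measurable fun η : E2 =>
          ENNReal.ofReal (‖ξ - η‖ ^ p) * (‖Θ z (ξ - η)‖₊ : ℝ≥0∞) * ‖Θ z η‖₊)]
        refine lintegral_congr fun η => ?_
        ring
    _ = Xnorm p (Θ z) * Xnorm 0 (Θ z) + Xnorm p (Θ z) * Xnorm 0 (Θ z) := by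
        congr 1
        · rw [lintegral_lintegral_swap hG1meas.aemeasurable]
          calc ∫⁻ η : E2, ∫⁻ ξ : E2,
                ENNReal.ofReal (‖ξ - η‖ ^ p) * (‖Θ z (ξ - η)‖₊ : ℝ≥0∞) * ‖Θ z η‖₊
              = ∫⁻ η : E2, Xnorm p (Θ z) * (‖Θ z η‖₊ : ℝ≥0∞) := by
                refine lintegral_congr fun η => ?_
                rw [lintegral_mul_const' _ _ ENNReal.coe_ne_top,
                  lintegral_sub_right_eq_self
                    (fun x => ENNReal.ofReal (‖x‖ ^ p) * (‖Θ z x‖₊ : ℝ≥0∞)) η]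
                rfl
            _ = Xnorm p (Θ z) * Xnorm 0 (Θ z) := by
                rw [lintegral_const_mul _ hF, hX0]
        · rw [lintegral_lintegral_swap hG2meas.aemeasurable]
          calc ∫⁻ η : E2, ∫⁻ ξ : E2,
                (ENNReal.ofReal (‖η‖ ^ p) * (‖Θ z η‖₊ : ℝ≥0∞)) * ‖Θ z (ξ - η)‖₊
              = ∫⁻ η : E2, (ENNReal.ofReal (‖η‖ ^ p) * (‖Θ z η‖₊ : ℝ≥0∞)) * Xnorm 0 (Θ z) := by
                refine lintegral_congr fun η => ?_
                have e2 : (fun ξ : E2 => (‖Θ z (ξ - η)‖₊ : ℝ≥0∞))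
                    = (fun x => (‖Θ z x‖₊ : ℝ≥0∞)) ∘ (fun ξ => ξ - η) := rfl
                have hm2 : Measurable fun ξ : E2 => (‖Θ z (ξ - η)‖₊ : ℝ≥0∞) := by
                  rw [e2]; exact hF.comp (measurable_id.sub measurable_const)
                rw [lintegral_const_mul _ hm2,
                  lintegral_sub_right_eq_self (fun x => (‖Θ z x‖₊ : ℝ≥0∞)) η, hX0]
            _ = Xnorm p (Θ z) * Xnorm 0 (Θ z) := by
                rw [lintegral_mul_const _ hg]
                rfl
    _ = 2 * Xnorm 0 (Θ z) * Xnorm p (Θ z) := by ring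

lemma weight_mul {δ : ℝ} {ξ : E2} (hξ : ξ ≠ 0) :
    ENNReal.ofReal (‖ξ‖ ^ (-δ)) * ENNReal.ofReal ‖ξ‖ = ENNReal.ofReal (‖ξ‖ ^ (1 - δ)) := by
  have hrpos : 0 < ‖ξ‖ := norm_pos_iff.mpr hξ
  rw [← ENNReal.ofReal_mul (Real.rpow_nonneg (norm_nonneg _) _)]
  congr 1
  calc ‖ξ‖ ^ (-δ) * ‖ξ‖ = ‖ξ‖ ^ (-δ) * ‖ξ‖ ^ (1:ℝ) := by rw [Real.rpow_one]
    _ = ‖ξ‖ ^ (-δ + 1) := (Real.rpow_add hrpos _ _).symm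
    _ = ‖ξ‖ ^ (1 - δ) := by rw [show -δ + 1 = 1 - δ from by ring]

/-- the a priori inequality in `X^{-δ}`:
`‖Θ(t)‖_{X^{-δ}} + ∫₀^t ‖Θ‖_{X^{1-δ}} ≤ ‖Θ₀‖_{X^{-δ}} + 2^{2-δ}(sup_{[0,t]}‖Θ‖_{X⁰})∫₀^t ‖Θ‖_{X^{1-δ}}`. -/
theorem qg_apriori_estimate_Xneg (δ : ℝ) (hδ0 : 0 ≤ δ) (hδ1 : δ < 1)
    (T : ℝ) (hT : 0 < T) (Θ₀ : E2 → ℂ) (hmeas₀ : Measurable Θ₀)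
    (Θ : ℝ → E2 → ℂ) (hmeas : Measurable (Function.uncurry Θ))
    (hmild : IsMildSolutionOn Θ Θ₀ T)
    (hsup0 : (⨆ t ∈ Set.Icc (0:ℝ) T, Xnorm 0 (Θ t)) < ⊤)
    (hsupδ : (⨆ t ∈ Set.Icc (0:ℝ) T, Xnorm (-δ) (Θ t)) < ⊤)
    (hint : (∫⁻ t in Set.Icc (0:ℝ) T, Xnorm (1 - δ) (Θ t)) < ⊤) :
    ∀ t ∈ Set.Icc (0:ℝ) T,
      Xnorm (-δ) (Θ t) + ∫⁻ z in Set.Ioc (0:ℝ) t, Xnorm (1 - δ) (Θ z)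
        ≤ Xnorm (-δ) Θ₀ +
          (2 : ℝ≥0∞) ^ (2 - δ) * (⨆ z ∈ Set.Icc (0:ℝ) t, Xnorm 0 (Θ z)) *
            ∫⁻ z in Set.Ioc (0:ℝ) t, Xnorm (1 - δ) (Θ z) := by
  intro t ht
  have ht0 : 0 ≤ t := ht.1
  have hQ : StronglyMeasurable (Function.uncurry (QGN Θ)) := qgn_measurable hmeas
  have hNslice : ∀ ξ : E2, Measurable fun s => QGN Θ s ξ := fun ξ => by
    have e : (fun s => QGN Θ s ξ) = Function.uncurry (QGN Θ) ∘ (fun s => (s, ξ)) := rfl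
    rw [e]; exact hQ.measurable.comp (measurable_id.prodMk measurable_const)
  have hΘt : Measurable (Θ t) := by
    have e : Θ t = Function.uncurry Θ ∘ (fun ξ => (t, ξ)) := rfl
    rw [e]; exact hmeas.comp (measurable_const.prodMk measurable_id)
  have hw : ∀ σ : ℝ, Measurable fun ξ : E2 => ENNReal.ofReal (‖ξ‖ ^ σ) := fun σ =>
    ENNReal.measurable_ofReal.comp (measurable_norm.pow_const σ)
  have hΘswap : Measurable (fun q : E2 × ℝ => Θ q.2 q.1) := by
    have e : (fun q : E2 × ℝ => Θ q.2 q.1) = Function.uncurry Θ ∘ (fun q => (q.2, q.1)) := rfl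
    rw [e]; exact hmeas.comp (measurable_snd.prodMk measurable_fst)
  have hQswap : Measurable (fun q : E2 × ℝ => QGN Θ q.2 q.1) := by
    have e : (fun q : E2 × ℝ => QGN Θ q.2 q.1)
        = Function.uncurry (QGN Θ) ∘ (fun q => (q.2, q.1)) := rfl
    rw [e]; exact hQ.measurable.comp (measurable_snd.prodMk measurable_fst)
  have hjoint1 : Measurable fun q : E2 × ℝ =>
      ENNReal.ofReal (‖q.1‖ ^ (1 - δ)) * (‖Θ q.2 q.1‖₊ : ℝ≥0∞) :=
    ((hw (1 - δ)).comp measurable_fst).mul hΘswap.enorm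
  have hjoint2 : Measurable fun q : E2 × ℝ =>
      ENNReal.ofReal (‖q.1‖ ^ (-δ)) * (‖QGN Θ q.2 q.1‖₊ : ℝ≥0∞) :=
    ((hw (-δ)).comp measurable_fst).mul hQswap.enorm
  have hXp_meas : Measurable fun s : ℝ => Xnorm (1 - δ) (Θ s) := by
    have e : (fun s : ℝ => Xnorm (1 - δ) (Θ s))
        = fun s : ℝ => ∫⁻ ξ : E2, ENNReal.ofReal (‖ξ‖ ^ (1 - δ)) * ‖Θ s ξ‖₊ := rfl
    rw [e]
    have hj : Measurable fun q : ℝ × E2 =>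
        ENNReal.ofReal (‖q.2‖ ^ (1 - δ)) * (‖Θ q.1 q.2‖₊ : ℝ≥0∞) :=
      ((hw (1 - δ)).comp measurable_snd).mul hmeas.enorm
    exact hj.lintegral_prod_right'
  -- the master pointwise estimate, a.e. in ξ
  have hmaster : ∀ᵐ ξ : E2 ∂volume,
      (‖Θ t ξ‖₊ : ℝ≥0∞) + ∫⁻ z in Set.Ioc (0:ℝ) t, ENNReal.ofReal ‖ξ‖ * ‖Θ z ξ‖₊
        ≤ (‖Θ₀ ξ‖₊ : ℝ≥0∞) + ∫⁻ s in Set.Ioc (0:ℝ) t, ‖QGN Θ s ξ‖₊ := by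
    have hj := joint_ae hmeas hmeas₀ hmild ht
    have htid := hmild t ht
    filter_upwards [hj, htid] with ξ hjξ htξ
    refine pointwise_master ht0 (hNslice ξ) ?_ (duhamel_bound ht0 htξ)
    have hz0 : ∀ᵐ z ∂(volume.restrict (Set.Ioc (0:ℝ) t)), (0:ℝ) ≤ z :=
      (ae_restrict_iff' measurableSet_Ioc).2 (Filter.Eventually.of_forall fun z hz => hz.1.le)
    filter_upwards [hjξ, hz0] with z hz hz0'
    exact duhamel_bound hz0' hz
  -- integrate against the weight
  have hLHS : ∫⁻ ξ : E2, ENNReal.ofReal (‖ξ‖ ^ (-δ)) *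
        ((‖Θ t ξ‖₊ : ℝ≥0∞) + ∫⁻ z in Set.Ioc (0:ℝ) t, ENNReal.ofReal ‖ξ‖ * ‖Θ z ξ‖₊)
      = Xnorm (-δ) (Θ t) + ∫⁻ z in Set.Ioc (0:ℝ) t, Xnorm (1 - δ) (Θ z) := by
    calc ∫⁻ ξ : E2, ENNReal.ofReal (‖ξ‖ ^ (-δ)) *
          ((‖Θ t ξ‖₊ : ℝ≥0∞) + ∫⁻ z in Set.Ioc (0:ℝ) t, ENNReal.ofReal ‖ξ‖ * ‖Θ z ξ‖₊)
        = ∫⁻ ξ : E2, (ENNReal.ofReal (‖ξ‖ ^ (-δ)) * (‖Θ t ξ‖₊ : ℝ≥0∞)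
            + ENNReal.ofReal (‖ξ‖ ^ (-δ)) *
              ∫⁻ z in Set.Ioc (0:ℝ) t, ENNReal.ofReal ‖ξ‖ * ‖Θ z ξ‖₊) :=
          lintegral_congr fun ξ => mul_add _ _ _
      _ = (∫⁻ ξ : E2, ENNReal.ofReal (‖ξ‖ ^ (-δ)) * (‖Θ t ξ‖₊ : ℝ≥0∞))
          + ∫⁻ ξ : E2, ENNReal.ofReal (‖ξ‖ ^ (-δ)) *
              ∫⁻ z in Set.Ioc (0:ℝ) t, ENNReal.ofReal ‖ξ‖ * ‖Θ z ξ‖₊ :=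
          lintegral_add_left ((hw (-δ)).mul hΘt.enorm) _
      _ = Xnorm (-δ) (Θ t) + ∫⁻ z in Set.Ioc (0:ℝ) t, Xnorm (1 - δ) (Θ z) := by
          congr 1
          calc ∫⁻ ξ : E2, ENNReal.ofReal (‖ξ‖ ^ (-δ)) *
                ∫⁻ z in Set.Ioc (0:ℝ) t, ENNReal.ofReal ‖ξ‖ * ‖Θ z ξ‖₊
              = ∫⁻ ξ : E2, ∫⁻ z in Set.Ioc (0:ℝ) t,
                  ENNReal.ofReal (‖ξ‖ ^ (1 - δ)) * ‖Θ z ξ‖₊ := by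
                refine lintegral_congr_ae ?_
                filter_upwards [ae_ne_zero] with ξ hξ
                rw [← lintegral_const_mul' _ _ ENNReal.ofReal_ne_top]
                refine lintegral_congr fun z => ?_
                rw [← mul_assoc, weight_mul hξ]
            _ = ∫⁻ z in Set.Ioc (0:ℝ) t, ∫⁻ ξ : E2,
                  ENNReal.ofReal (‖ξ‖ ^ (1 - δ)) * ‖Θ z ξ‖₊ :=
                lintegral_lintegral_swap hjoint1.aemeasurable
            _ = ∫⁻ z in Set.Ioc (0:ℝ) t, Xnorm (1 - δ) (Θ z) := rfl
  have hRHS : ∫⁻ ξ : E2, ENNReal.ofReal (‖ξ‖ ^ (-δ)) *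
        ((‖Θ₀ ξ‖₊ : ℝ≥0∞) + ∫⁻ s in Set.Ioc (0:ℝ) t, ‖QGN Θ s ξ‖₊)
      = Xnorm (-δ) Θ₀ + ∫⁻ s in Set.Ioc (0:ℝ) t,
          ∫⁻ ξ : E2, ENNReal.ofReal (‖ξ‖ ^ (-δ)) * ‖QGN Θ s ξ‖₊ := by
    calc ∫⁻ ξ : E2, ENNReal.ofReal (‖ξ‖ ^ (-δ)) *
          ((‖Θ₀ ξ‖₊ : ℝ≥0∞) + ∫⁻ s in Set.Ioc (0:ℝ) t, ‖QGN Θ s ξ‖₊)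
        = ∫⁻ ξ : E2, (ENNReal.ofReal (‖ξ‖ ^ (-δ)) * (‖Θ₀ ξ‖₊ : ℝ≥0∞)
            + ENNReal.ofReal (‖ξ‖ ^ (-δ)) * ∫⁻ s in Set.Ioc (0:ℝ) t, ‖QGN Θ s ξ‖₊) :=
          lintegral_congr fun ξ => mul_add _ _ _
      _ = (∫⁻ ξ : E2, ENNReal.ofReal (‖ξ‖ ^ (-δ)) * (‖Θ₀ ξ‖₊ : ℝ≥0∞))
          + ∫⁻ ξ : E2, ENNReal.ofReal (‖ξ‖ ^ (-δ)) *
              ∫⁻ s in Set.Ioc (0:ℝ) t, ‖QGN Θ s ξ‖₊ :=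
          lintegral_add_left ((hw (-δ)).mul hmeas₀.enorm) _
      _ = Xnorm (-δ) Θ₀ + ∫⁻ s in Set.Ioc (0:ℝ) t,
            ∫⁻ ξ : E2, ENNReal.ofReal (‖ξ‖ ^ (-δ)) * ‖QGN Θ s ξ‖₊ := by
          congr 1
          calc ∫⁻ ξ : E2, ENNReal.ofReal (‖ξ‖ ^ (-δ)) *
                ∫⁻ s in Set.Ioc (0:ℝ) t, ‖QGN Θ s ξ‖₊
              = ∫⁻ ξ : E2, ∫⁻ s in Set.Ioc (0:ℝ) t,
                  ENNReal.ofReal (‖ξ‖ ^ (-δ)) * ‖QGN Θ s ξ‖₊ :=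
                lintegral_congr fun ξ =>
                  (lintegral_const_mul' _ _ ENNReal.ofReal_ne_top).symm
            _ = ∫⁻ s in Set.Ioc (0:ℝ) t,
                  ∫⁻ ξ : E2, ENNReal.ofReal (‖ξ‖ ^ (-δ)) * ‖QGN Θ s ξ‖₊ :=
                lintegral_lintegral_swap hjoint2.aemeasurable
  have hmono : ∫⁻ ξ : E2, ENNReal.ofReal (‖ξ‖ ^ (-δ)) *
        ((‖Θ t ξ‖₊ : ℝ≥0∞) + ∫⁻ z in Set.Ioc (0:ℝ) t, ENNReal.ofReal ‖ξ‖ * ‖Θ z ξ‖₊)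
      ≤ ∫⁻ ξ : E2, ENNReal.ofReal (‖ξ‖ ^ (-δ)) *
        ((‖Θ₀ ξ‖₊ : ℝ≥0∞) + ∫⁻ s in Set.Ioc (0:ℝ) t, ‖QGN Θ s ξ‖₊) := by
    refine lintegral_mono_ae ?_
    filter_upwards [hmaster] with ξ h
    exact mul_le_mul_right h _
  rw [hLHS, hRHS] at hmono
  set S := ⨆ z ∈ Set.Icc (0:ℝ) t, Xnorm 0 (Θ z) with hS
  set I := ∫⁻ z in Set.Ioc (0:ℝ) t, Xnorm (1 - δ) (Θ z) with hI
  have hNL : ∫⁻ s in Set.Ioc (0:ℝ) t,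
        (∫⁻ ξ : E2, ENNReal.ofReal (‖ξ‖ ^ (-δ)) * ‖QGN Θ s ξ‖₊)
      ≤ (2 * S) * I := by
    calc ∫⁻ s in Set.Ioc (0:ℝ) t, (∫⁻ ξ : E2, ENNReal.ofReal (‖ξ‖ ^ (-δ)) * ‖QGN Θ s ξ‖₊)
        ≤ ∫⁻ s in Set.Ioc (0:ℝ) t, (2 * S) * Xnorm (1 - δ) (Θ s) := by
          refine setLIntegral_mono_ae ((measurable_const.mul hXp_meas).aemeasurable) ?_
          refine Filter.Eventually.of_forall fun s hs => ?_
          calc ∫⁻ ξ : E2, ENNReal.ofReal (‖ξ‖ ^ (-δ)) * ‖QGN Θ s ξ‖₊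
              ≤ 2 * Xnorm 0 (Θ s) * Xnorm (1 - δ) (Θ s) :=
                nonlinear_estimate hmeas hδ0 hδ1 s
            _ ≤ (2 * S) * Xnorm (1 - δ) (Θ s) := by
                refine mul_le_mul_left (mul_le_mul_right ?_ 2) _
                exact le_biSup (fun z => Xnorm 0 (Θ z)) ⟨hs.1.le, hs.2⟩
      _ = (2 * S) * I := lintegral_const_mul _ hXp_meas
  have h2 : (2:ℝ≥0∞) ≤ (2:ℝ≥0∞) ^ (2 - δ) := by
    calc (2:ℝ≥0∞) = (2:ℝ≥0∞) ^ (1:ℝ) := (ENNReal.rpow_one 2).symm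
      _ ≤ (2:ℝ≥0∞) ^ (2 - δ) :=
        ENNReal.rpow_le_rpow_of_exponent_le (by norm_num) (by linarith)
  calc Xnorm (-δ) (Θ t) + I
      ≤ Xnorm (-δ) Θ₀ + ∫⁻ s in Set.Ioc (0:ℝ) t,
          (∫⁻ ξ : E2, ENNReal.ofReal (‖ξ‖ ^ (-δ)) * ‖QGN Θ s ξ‖₊) := hmono
    _ ≤ Xnorm (-δ) Θ₀ + (2 * S) * I := add_le_add_right hNL _
    _ ≤ Xnorm (-δ) Θ₀ + (2:ℝ≥0∞) ^ (2 - δ) * S * I := by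
        refine add_le_add_right ?_ _
        exact mul_le_mul_left (mul_le_mul_left h2 S) I

end
end

section
/- Let T > 0 and let Θ : [0,T] × ℝ² → ℂ be measurable with M := sup_{0≤t≤T} ‖Θ(t)‖_{X⁰} < ∞ and I := ∫₀^T ‖Θ(t)‖_{X¹} dt < ∞. Then ∫₀^T ∫_{ℝ²} |ξ| · | ∫₀^t e^{−(t−z)|ξ|} N[Θ](z,ξ) dz | dξ dt ≤ M · I. -/
open MeasureTheory Filter
open scoped ENNReal NNReal

noncomputable section

namespace DuhamelAux

open Set

/-- pointwise kernel bound integrand -/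
@[irreducible] def B (Θ : ℝ → E2 → ℂ) (z : ℝ) (ξ : E2) : ℝ≥0∞ :=
  ∫⁻ η : E2, (‖ξ - η‖₊ : ℝ≥0∞) * ((‖Θ z (ξ - η)‖₊ : ℝ≥0∞) * (‖Θ z η‖₊ : ℝ≥0∞))

@[irreducible] def P (Θ : ℝ → E2 → ℂ) (t z : ℝ) (ξ : E2) : ℝ≥0∞ :=
  if z ≤ t then (‖ξ‖₊ : ℝ≥0∞) * ENNReal.ofReal (Real.exp (-((t - z) * ‖ξ‖))) * B Θ z ξ else 0

lemma P_of_le {Θ : ℝ → E2 → ℂ} {t z : ℝ} (ξ : E2) (h : z ≤ t) :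
    P Θ t z ξ = (‖ξ‖₊ : ℝ≥0∞) * ENNReal.ofReal (Real.exp (-((t - z) * ‖ξ‖))) * B Θ z ξ := by
  unfold P; exact if_pos h

lemma P_eq_mul (Θ : ℝ → E2 → ℂ) (t z : ℝ) (ξ : E2) :
    P Θ t z ξ = (if z ≤ t then (‖ξ‖₊ : ℝ≥0∞) *
      ENNReal.ofReal (Real.exp (-((t - z) * ‖ξ‖))) else 0) * B Θ z ξ := by
  unfold P; split <;> simp

variable {Θ : ℝ → E2 → ℂ}

lemma measurable_B (hmeas : Measurable (Function.uncurry Θ)) :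
    Measurable (fun p : ℝ × E2 => B Θ p.1 p.2) := by
  have h1 : Measurable (fun q : (ℝ × E2) × E2 => (‖q.1.2 - q.2‖₊ : ℝ≥0∞)) :=
    (measurable_fst.snd.sub measurable_snd).enorm
  have h2 : Measurable (fun q : (ℝ × E2) × E2 => (‖Θ q.1.1 (q.1.2 - q.2)‖₊ : ℝ≥0∞)) := by
    have hc : Measurable (fun q : (ℝ × E2) × E2 => Θ q.1.1 (q.1.2 - q.2)) :=
      hmeas.comp (measurable_fst.fst.prodMk (measurable_fst.snd.sub measurable_snd))
    exact hc.enorm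
  have h3 : Measurable (fun q : (ℝ × E2) × E2 => (‖Θ q.1.1 q.2‖₊ : ℝ≥0∞)) := by
    have hc : Measurable (fun q : (ℝ × E2) × E2 => Θ q.1.1 q.2) :=
      hmeas.comp (measurable_fst.fst.prodMk measurable_snd)
    exact hc.enorm
  unfold B
  exact (h1.mul (h2.mul h3)).lintegral_prod_right'

lemma measurable_P (hmeas : Measurable (Function.uncurry Θ)) :
    Measurable (fun q : (ℝ × ℝ) × E2 => P Θ q.1.1 q.1.2 q.2) := by
  unfold P
  refine Measurable.ite (measurableSet_le measurable_fst.snd measurable_fst.fst)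
    ?_ measurable_const
  have hK : Measurable (fun q : (ℝ × ℝ) × E2 =>
      ENNReal.ofReal (Real.exp (-((q.1.1 - q.1.2) * ‖q.2‖)))) :=
    ENNReal.measurable_ofReal.comp (Real.measurable_exp.comp
      (((measurable_fst.fst.sub measurable_fst.snd).mul measurable_snd.norm).neg))
  exact (measurable_snd.enorm.mul hK).mul
    ((measurable_B hmeas).comp (measurable_fst.snd.prodMk measurable_snd))

lemma abs_sym_le (ξ η : E2) : |(ξ 0 * η 1 - ξ 1 * η 0) / ‖η‖| ≤ ‖ξ - η‖ := by
  rcases eq_or_ne η 0 with rfl | hη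
  · simp
  · have hpos : 0 < ‖η‖ := norm_pos_iff.2 hη
    rw [abs_div, abs_of_nonneg (norm_nonneg η), div_le_iff₀ hpos]
    have key : ξ 0 * η 1 - ξ 1 * η 0 = (ξ - η) 0 * η 1 - (ξ - η) 1 * η 0 := by
      simp only [PiLp.sub_apply]; ring
    have hna : ∀ a : E2, ‖a‖ = Real.sqrt (a 0 ^ 2 + a 1 ^ 2) := fun a => by
      rw [EuclideanSpace.norm_eq]
      simp [Fin.sum_univ_two, Real.norm_eq_abs, sq_abs]
    rw [key, hna (ξ - η), hna η]
    set a := ξ - η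
    have h2 : (a 0 * η 1 - a 1 * η 0) ^ 2 ≤ (a 0 ^ 2 + a 1 ^ 2) * (η 0 ^ 2 + η 1 ^ 2) := by
      nlinarith [sq_nonneg (a 0 * η 0 + a 1 * η 1)]
    calc |a 0 * η 1 - a 1 * η 0| = Real.sqrt ((a 0 * η 1 - a 1 * η 0) ^ 2) :=
          (Real.sqrt_sq_eq_abs _).symm
      _ ≤ Real.sqrt ((a 0 ^ 2 + a 1 ^ 2) * (η 0 ^ 2 + η 1 ^ 2)) := Real.sqrt_le_sqrt h2
      _ = Real.sqrt (a 0 ^ 2 + a 1 ^ 2) * Real.sqrt (η 0 ^ 2 + η 1 ^ 2) :=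
          Real.sqrt_mul (by positivity) _

lemma qgn_nnnorm_le (Θ : ℝ → E2 → ℂ) (z : ℝ) (ξ : E2) :
    (‖QGN Θ z ξ‖₊ : ℝ≥0∞) ≤ B Θ z ξ := by
  unfold QGN B
  refine (enorm_integral_le_lintegral_enorm _).trans (lintegral_mono fun η => ?_)
  rw [enorm_eq_nnnorm, nnnorm_mul, nnnorm_mul, ENNReal.coe_mul, ENNReal.coe_mul, Complex.nnnorm_real, mul_assoc]
  refine mul_le_mul_left ?_ _
  refine ENNReal.coe_le_coe.2 ?_
  have h := abs_sym_le ξ η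
  rwa [← Real.norm_eq_abs, ← coe_nnnorm, ← coe_nnnorm ((ξ - η : E2)), NNReal.coe_le_coe] at h

lemma X1_eq (g : E2 → ℂ) : Xnorm 1 g = ∫⁻ ξ : E2, (‖ξ‖₊ : ℝ≥0∞) * (‖g ξ‖₊ : ℝ≥0∞) := by
  simp [Xnorm, Real.rpow_one, ofReal_norm, enorm_eq_nnnorm]

lemma X0_eq (g : E2 → ℂ) : Xnorm 0 g = ∫⁻ ξ : E2, (‖g ξ‖₊ : ℝ≥0∞) := by
  simp [Xnorm, Real.rpow_zero]

lemma B_lintegral (hmeas : Measurable (Function.uncurry Θ)) (z : ℝ) :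
    (∫⁻ ξ : E2, B Θ z ξ) = Xnorm 1 (Θ z) * Xnorm 0 (Θ z) := by
  have hΘc : Measurable (Θ z) := hmeas.comp measurable_prodMk_left
  have hΘz : Measurable fun ξ : E2 => (‖Θ z ξ‖₊ : ℝ≥0∞) := hΘc.enorm
  have hswap : (∫⁻ ξ : E2, B Θ z ξ) = ∫⁻ η : E2, ∫⁻ ξ : E2,
      (‖ξ - η‖₊ : ℝ≥0∞) * ((‖Θ z (ξ - η)‖₊ : ℝ≥0∞) * (‖Θ z η‖₊ : ℝ≥0∞)) := by
    unfold B
    refine lintegral_lintegral_swap ?_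
    have hm1 : Measurable (fun p : E2 × E2 => (‖Θ z (p.1 - p.2)‖₊ : ℝ≥0∞)) :=
      (hΘc.comp (measurable_fst.sub measurable_snd)).enorm
    have hm2 : Measurable (fun p : E2 × E2 => (‖Θ z p.2‖₊ : ℝ≥0∞)) :=
      (hΘc.comp measurable_snd).enorm
    exact ((measurable_fst.sub measurable_snd).enorm.mul (hm1.mul hm2)).aemeasurable
  rw [hswap]
  have hinner : ∀ η : E2, (∫⁻ ξ : E2,
      (‖ξ - η‖₊ : ℝ≥0∞) * ((‖Θ z (ξ - η)‖₊ : ℝ≥0∞) * (‖Θ z η‖₊ : ℝ≥0∞)))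
      = Xnorm 1 (Θ z) * (‖Θ z η‖₊ : ℝ≥0∞) := by
    intro η
    calc (∫⁻ ξ : E2, (‖ξ - η‖₊ : ℝ≥0∞) * ((‖Θ z (ξ - η)‖₊ : ℝ≥0∞) * (‖Θ z η‖₊ : ℝ≥0∞)))
        = ∫⁻ ξ : E2, ((‖ξ - η‖₊ : ℝ≥0∞) * (‖Θ z (ξ - η)‖₊ : ℝ≥0∞)) * (‖Θ z η‖₊ : ℝ≥0∞) :=
          lintegral_congr fun ξ => (mul_assoc _ _ _).symm
      _ = (∫⁻ ξ : E2, (‖ξ - η‖₊ : ℝ≥0∞) * (‖Θ z (ξ - η)‖₊ : ℝ≥0∞)) * (‖Θ z η‖₊ : ℝ≥0∞) :=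
          lintegral_mul_const' _ _ ENNReal.coe_ne_top
      _ = (∫⁻ ξ : E2, (‖ξ‖₊ : ℝ≥0∞) * (‖Θ z ξ‖₊ : ℝ≥0∞)) * (‖Θ z η‖₊ : ℝ≥0∞) := by
          rw [lintegral_sub_right_eq_self
            (fun ξ => (‖ξ‖₊ : ℝ≥0∞) * (‖Θ z ξ‖₊ : ℝ≥0∞)) η]
      _ = Xnorm 1 (Θ z) * (‖Θ z η‖₊ : ℝ≥0∞) := by rw [X1_eq]
  calc (∫⁻ η : E2, ∫⁻ ξ : E2,
      (‖ξ - η‖₊ : ℝ≥0∞) * ((‖Θ z (ξ - η)‖₊ : ℝ≥0∞) * (‖Θ z η‖₊ : ℝ≥0∞)))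
      = ∫⁻ η : E2, Xnorm 1 (Θ z) * (‖Θ z η‖₊ : ℝ≥0∞) := lintegral_congr hinner
    _ = Xnorm 1 (Θ z) * ∫⁻ η : E2, (‖Θ z η‖₊ : ℝ≥0∞) :=
        lintegral_const_mul'' _ hΘz.aemeasurable
    _ = Xnorm 1 (Θ z) * Xnorm 0 (Θ z) := by rw [X0_eq]

lemma time_le_one (T z : ℝ) (ξ : E2) :
    (∫⁻ t in Set.Icc (0:ℝ) T, (if z ≤ t then (‖ξ‖₊ : ℝ≥0∞) *
        ENNReal.ofReal (Real.exp (-((t - z) * ‖ξ‖))) else 0)) ≤ 1 := by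
  rcases eq_or_lt_of_le (norm_nonneg ξ) with h0 | h0
  · have hz : (‖ξ‖₊ : ℝ≥0∞) = 0 := by
      rw [← enorm_eq_nnnorm, ← ofReal_norm, ← h0, ENNReal.ofReal_zero]
    simp [hz]
  · have hfun : ∀ t : ℝ, ‖ξ‖ * Real.exp (-((t - z) * ‖ξ‖))
        = (‖ξ‖ * Real.exp (z * ‖ξ‖)) * Real.exp (-‖ξ‖ * t) := by
      intro t; rw [mul_assoc, ← Real.exp_add]; ring_nf
    have hint : IntegrableOn (fun t => ‖ξ‖ * Real.exp (-((t - z) * ‖ξ‖))) (Set.Ioi z) := by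
      have : (fun t : ℝ => ‖ξ‖ * Real.exp (-((t - z) * ‖ξ‖)))
          = fun t => (‖ξ‖ * Real.exp (z * ‖ξ‖)) * Real.exp (-‖ξ‖ * t) := funext hfun
      rw [this]
      exact (exp_neg_integrableOn_Ioi z h0).const_mul _
    have hval : (∫ t in Set.Ioi z, ‖ξ‖ * Real.exp (-((t - z) * ‖ξ‖))) = 1 := by
      simp_rw [hfun]
      rw [MeasureTheory.integral_const_mul]
      have h2 : (∫ t in Set.Ioi z, Real.exp (-‖ξ‖ * t)) = ‖ξ‖⁻¹ * Real.exp (-(z * ‖ξ‖)) := by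
        have h3 := integral_comp_mul_right_Ioi (fun x => Real.exp (-x)) z h0
        simp only [smul_eq_mul] at h3
        have h4 : (fun t : ℝ => Real.exp (-‖ξ‖ * t)) = fun t : ℝ => Real.exp (-(t * ‖ξ‖)) := by
          funext t; ring_nf
        rw [h4, h3, integral_exp_neg_Ioi]
      rw [h2, Real.exp_neg]
      field_simp
    have hrw : ∀ t : ℝ, (if z ≤ t then (‖ξ‖₊ : ℝ≥0∞) *
        ENNReal.ofReal (Real.exp (-((t - z) * ‖ξ‖))) else 0)
        = (Set.Ici z).indicator (fun t => ENNReal.ofReal (‖ξ‖ * Real.exp (-((t - z) * ‖ξ‖)))) t := by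
      intro t
      rw [Set.indicator_apply]
      simp only [Set.mem_Ici]
      by_cases h : z ≤ t <;>
        simp [h, ENNReal.ofReal_mul (norm_nonneg ξ), ofReal_norm, enorm_eq_nnnorm]
    simp_rw [hrw]
    calc (∫⁻ t in Set.Icc (0:ℝ) T,
          (Set.Ici z).indicator (fun t => ENNReal.ofReal (‖ξ‖ * Real.exp (-((t - z) * ‖ξ‖)))) t)
        ≤ ∫⁻ t, (Set.Ici z).indicator
            (fun t => ENNReal.ofReal (‖ξ‖ * Real.exp (-((t - z) * ‖ξ‖)))) t :=
          setLIntegral_le_lintegral _ _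
      _ = ∫⁻ t in Set.Ici z, ENNReal.ofReal (‖ξ‖ * Real.exp (-((t - z) * ‖ξ‖))) :=
          lintegral_indicator measurableSet_Ici _
      _ = ∫⁻ t in Set.Ioi z, ENNReal.ofReal (‖ξ‖ * Real.exp (-((t - z) * ‖ξ‖))) :=
          (setLIntegral_congr Ioi_ae_eq_Ici).symm
      _ = ENNReal.ofReal (∫ t in Set.Ioi z, ‖ξ‖ * Real.exp (-((t - z) * ‖ξ‖))) :=
          (ofReal_integral_eq_lintegral_ofReal hint
            (Filter.Eventually.of_forall fun t => by positivity)).symm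
      _ = 1 := by rw [hval, ENNReal.ofReal_one]

end DuhamelAux

/-- Lemma 2.4: `L¹_T(X¹)` bound for the Duhamel term:
`∫₀^T ‖∫₀^t e^{-(t-z)|D|} N[Θ](z) dz‖_{X¹} dt ≤ (sup_{[0,T]}‖Θ‖_{X⁰})(∫₀^T ‖Θ‖_{X¹})`. -/
theorem duhamel_X1_bound (T : ℝ) (hT : 0 < T)
    (Θ : ℝ → E2 → ℂ) (hmeas : Measurable (Function.uncurry Θ))
    (hsup : (⨆ t ∈ Set.Icc (0:ℝ) T, Xnorm 0 (Θ t)) < ⊤)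
    (hint : (∫⁻ t in Set.Icc (0:ℝ) T, Xnorm 1 (Θ t)) < ⊤) :
    (∫⁻ t in Set.Icc (0:ℝ) T, ∫⁻ ξ : E2, (‖ξ‖₊ : ℝ≥0∞) *
        ‖∫ z in (0:ℝ)..t, ((Real.exp (-((t - z) * ‖ξ‖)) : ℝ) : ℂ) * QGN Θ z ξ‖₊)
      ≤ (⨆ s ∈ Set.Icc (0:ℝ) T, Xnorm 0 (Θ s)) *
          ∫⁻ s in Set.Icc (0:ℝ) T, Xnorm 1 (Θ s) := by
  classical
  set M := ⨆ s ∈ Set.Icc (0:ℝ) T, Xnorm 0 (Θ s) with hMdef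
  set Icc0T := Set.Icc (0:ℝ) T with hIcc
  have stepA : (∫⁻ t in Icc0T, ∫⁻ ξ : E2, (‖ξ‖₊ : ℝ≥0∞) *
        ‖∫ z in (0:ℝ)..t, ((Real.exp (-((t - z) * ‖ξ‖)) : ℝ) : ℂ) * QGN Θ z ξ‖₊)
      ≤ ∫⁻ t in Icc0T, ∫⁻ ξ : E2, ∫⁻ z in Icc0T, DuhamelAux.P Θ t z ξ := by
    refine lintegral_mono_ae ?_
    filter_upwards [ae_restrict_mem measurableSet_Icc] with t ht
    refine lintegral_mono fun ξ => ?_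
    calc (‖ξ‖₊ : ℝ≥0∞) * ‖∫ z in (0:ℝ)..t,
          ((Real.exp (-((t - z) * ‖ξ‖)) : ℝ) : ℂ) * QGN Θ z ξ‖₊
        ≤ (‖ξ‖₊ : ℝ≥0∞) * ∫⁻ z in Set.Ioc 0 t,
            ‖((Real.exp (-((t - z) * ‖ξ‖)) : ℝ) : ℂ) * QGN Θ z ξ‖₊ := by
          refine mul_le_mul_right ?_ _
          rw [intervalIntegral.integral_of_le ht.1]
          exact enorm_integral_le_lintegral_enorm _
      _ = ∫⁻ z in Set.Ioc 0 t, (‖ξ‖₊ : ℝ≥0∞) *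
            ‖((Real.exp (-((t - z) * ‖ξ‖)) : ℝ) : ℂ) * QGN Θ z ξ‖₊ :=
          (lintegral_const_mul' _ _ ENNReal.coe_ne_top).symm
      _ ≤ ∫⁻ z in Set.Ioc 0 t, DuhamelAux.P Θ t z ξ := by
          refine lintegral_mono_ae ?_
          filter_upwards [ae_restrict_mem measurableSet_Ioc] with z hz
          rw [nnnorm_mul, ENNReal.coe_mul, Complex.nnnorm_real,
            ← enorm_eq_nnnorm (Real.exp (-((t - z) * ‖ξ‖))), Real.enorm_eq_ofReal (Real.exp_nonneg _), ← mul_assoc,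
            DuhamelAux.P_of_le ξ hz.2]
          exact mul_le_mul_right (DuhamelAux.qgn_nnnorm_le Θ z ξ) _
      _ ≤ ∫⁻ z in Icc0T, DuhamelAux.P Θ t z ξ :=
          lintegral_mono_set (fun z hz => ⟨hz.1.le, hz.2.trans ht.2⟩)
  have swap1 : ∀ t : ℝ, (∫⁻ ξ : E2, ∫⁻ z in Icc0T, DuhamelAux.P Θ t z ξ)
      = ∫⁻ z in Icc0T, ∫⁻ ξ : E2, DuhamelAux.P Θ t z ξ := by
    intro t
    refine lintegral_lintegral_swap ?_
    exact ((DuhamelAux.measurable_P hmeas).comp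
      (((measurable_const.prodMk measurable_snd).prodMk measurable_fst) :
        Measurable fun p : E2 × ℝ => ((t, p.2), p.1))).aemeasurable
  have swap2 : (∫⁻ t in Icc0T, ∫⁻ z in Icc0T, ∫⁻ ξ : E2, DuhamelAux.P Θ t z ξ)
      = ∫⁻ z in Icc0T, ∫⁻ t in Icc0T, ∫⁻ ξ : E2, DuhamelAux.P Θ t z ξ :=
    lintegral_lintegral_swap
      ((DuhamelAux.measurable_P hmeas).lintegral_prod_right'.aemeasurable)
  have swap3 : ∀ z : ℝ, (∫⁻ t in Icc0T, ∫⁻ ξ : E2, DuhamelAux.P Θ t z ξ)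
      = ∫⁻ ξ : E2, ∫⁻ t in Icc0T, DuhamelAux.P Θ t z ξ := by
    intro z
    refine lintegral_lintegral_swap ?_
    exact ((DuhamelAux.measurable_P hmeas).comp
      (((measurable_fst.prodMk measurable_const).prodMk measurable_snd) :
        Measurable fun p : ℝ × E2 => ((p.1, z), p.2))).aemeasurable
  have stepE : ∀ z : ℝ, (∫⁻ ξ : E2, ∫⁻ t in Icc0T, DuhamelAux.P Θ t z ξ)
      ≤ Xnorm 1 (Θ z) * Xnorm 0 (Θ z) := by
    intro z
    have hb : ∀ ξ : E2, (∫⁻ t in Icc0T, DuhamelAux.P Θ t z ξ) ≤ DuhamelAux.B Θ z ξ := by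
      intro ξ
      have hm : Measurable fun t : ℝ => (if z ≤ t then (‖ξ‖₊ : ℝ≥0∞) *
          ENNReal.ofReal (Real.exp (-((t - z) * ‖ξ‖))) else 0) := by
        refine Measurable.ite (measurableSet_le measurable_const measurable_id) ?_
          measurable_const
        exact measurable_const.mul (ENNReal.measurable_ofReal.comp
          (Real.measurable_exp.comp (((measurable_id.sub measurable_const).mul
            measurable_const).neg)))
      calc (∫⁻ t in Icc0T, DuhamelAux.P Θ t z ξ)
          = (∫⁻ t in Icc0T, (if z ≤ t then (‖ξ‖₊ : ℝ≥0∞) *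
              ENNReal.ofReal (Real.exp (-((t - z) * ‖ξ‖))) else 0)) * DuhamelAux.B Θ z ξ := by
            simp_rw [DuhamelAux.P_eq_mul]
            exact lintegral_mul_const'' _ hm.aemeasurable
        _ ≤ 1 * DuhamelAux.B Θ z ξ :=
            mul_le_mul_left (DuhamelAux.time_le_one T z ξ) _
        _ = DuhamelAux.B Θ z ξ := one_mul _
    calc (∫⁻ ξ : E2, ∫⁻ t in Icc0T, DuhamelAux.P Θ t z ξ)
        ≤ ∫⁻ ξ : E2, DuhamelAux.B Θ z ξ := lintegral_mono hb
      _ = Xnorm 1 (Θ z) * Xnorm 0 (Θ z) := DuhamelAux.B_lintegral hmeas z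
  calc (∫⁻ t in Icc0T, ∫⁻ ξ : E2, (‖ξ‖₊ : ℝ≥0∞) *
        ‖∫ z in (0:ℝ)..t, ((Real.exp (-((t - z) * ‖ξ‖)) : ℝ) : ℂ) * QGN Θ z ξ‖₊)
      ≤ ∫⁻ t in Icc0T, ∫⁻ ξ : E2, ∫⁻ z in Icc0T, DuhamelAux.P Θ t z ξ := stepA
    _ = ∫⁻ t in Icc0T, ∫⁻ z in Icc0T, ∫⁻ ξ : E2, DuhamelAux.P Θ t z ξ :=
        lintegral_congr fun t => swap1 t
    _ = ∫⁻ z in Icc0T, ∫⁻ t in Icc0T, ∫⁻ ξ : E2, DuhamelAux.P Θ t z ξ := swap2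
    _ ≤ ∫⁻ z in Icc0T, M * Xnorm 1 (Θ z) := by
        refine lintegral_mono_ae ?_
        filter_upwards [ae_restrict_mem measurableSet_Icc] with z hz
        calc (∫⁻ t in Icc0T, ∫⁻ ξ : E2, DuhamelAux.P Θ t z ξ)
            = ∫⁻ ξ : E2, ∫⁻ t in Icc0T, DuhamelAux.P Θ t z ξ := swap3 z
          _ ≤ Xnorm 1 (Θ z) * Xnorm 0 (Θ z) := stepE z
          _ ≤ Xnorm 1 (Θ z) * M :=
              mul_le_mul_right (le_biSup (fun s => Xnorm 0 (Θ s)) hz) _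
          _ = M * Xnorm 1 (Θ z) := mul_comm _ _
    _ = M * ∫⁻ z in Icc0T, Xnorm 1 (Θ z) := lintegral_const_mul' M _ hsup.ne

end
end
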